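/- arXiv:1311.2774 — 6 statements merged into one kernel-verified Lean document; each statement's English description precedes it below -/
import Mathlib

section
/- Let p be a prime and R a perfect 𝔽_p-algebra. Then C(R) is a strict p-ring with residue ring R: the element p is not a zero divisor in C(R), and for every n ≥ 1 the ideal Î^n (the kernel of the projection C(R) → ℤR/I^n) equals p^n·C(R); in particular C(R)/p·C(R) is isomorphic to R via the map induced by π. -/
set_option synthInstance.maxHeartbeats 1000000
set_option maxHeartbeats 1000000

open MonoidAlgebra

/-- `ℤR`: the monoid algebra over `ℤ` of the multiplicative monoid `(R, ·)`. -/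
abbrev ZR (R : Type*) [CommRing R] : Type _ := MonoidAlgebra ℤ R

/-- The canonical ring homomorphism `π : ℤR → R`, `Σ n_r [r] ↦ Σ n_r r`. -/
noncomputable def piHom (R : Type*) [CommRing R] : ZR R →+* R :=
  (MonoidAlgebra.lift ℤ R R (MonoidHom.id R)).toRingHom

/-- The ideal `I = ker (π : ℤR → R)`. -/
noncomputable def Iid (R : Type*) [CommRing R] : Ideal (ZR R) := RingHom.ker (piHom R)

/-- The inverse limit `lim_ν A⧸I^ν` realized as a subring of the product `Π ν, A⧸I^ν`
(families compatible under the canonical factor maps). -/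
def Clim (A : Type*) [CommRing A] (I : Ideal A) : Subring (Π ν : ℕ, A ⧸ I ^ ν) where
  carrier := { x | ∀ ⦃m ν : ℕ⦄ (h : m ≤ ν),
    Ideal.Quotient.factor (Ideal.pow_le_pow_right h) (x ν) = x m }
  zero_mem' := by intro m ν h; simp
  one_mem' := by intro m ν h; simp
  add_mem' := by intro x y hx hy m ν h; simp only [Pi.add_apply, map_add, hx h, hy h]
  mul_mem' := by intro x y hx hy m ν h; simp only [Pi.mul_apply, map_mul, hx h, hy h]
  neg_mem' := by intro x hx m ν h; simp only [Pi.neg_apply, map_neg, hx h]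

/-- The projection of the completion `lim_ν A⧸I^ν` onto its `ν`-th level `A⧸I^ν`. -/
def Ceval (A : Type*) [CommRing A] (I : Ideal A) (ν : ℕ) : Clim A I →+* A ⧸ I ^ ν :=
  (Pi.evalRingHom _ ν).comp (Clim A I).subtype

/-- The canonical map `A → lim_ν A⧸I^ν`. -/
def CofRingHom (A : Type*) [CommRing A] (I : Ideal A) : A →+* Clim A I where
  toFun a := ⟨fun ν => Ideal.Quotient.mk _ a, fun _ _ _ => Ideal.Quotient.factor_mk _ _⟩
  map_one' := rfl
  map_mul' _ _ := rfl
  map_zero' := rfl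
  map_add' _ _ := rfl

/-- `C(R)`: the `I`-adic completion of `ℤR`. -/
noncomputable abbrev CR (R : Type*) [CommRing R] : Type _ := Clim (ZR R) (Iid R)

/-- The canonical projection `π̄ : C(R) → R` induced by `π`. -/
noncomputable def CtoR (R : Type*) [CommRing R] : CR R →+* R :=
  (Ideal.Quotient.lift (Iid R) (piHom R) (fun _ ha => ha)).comp
    (((Ideal.quotEquivOfEq (pow_one (Iid R))).toRingHom).comp (Ceval (ZR R) (Iid R) 1))

section CuntzDeningerAux

open MonoidAlgebra in
private lemma pi_of {R : Type*} [CommRing R] (r : R) : piHom R (of ℤ R r) = r := by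
  simp [piHom]

open MonoidAlgebra in
private lemma pi_single {R : Type*} [CommRing R] (r : R) :
    piHom R (MonoidAlgebra.single r (1:ℤ)) = r := pi_of r

private lemma p_mem_I {R : Type*} [CommRing R] (p : ℕ) [CharP R p] : (p : ZR R) ∈ Iid R := by
  simp [Iid, RingHom.mem_ker, map_natCast, CharP.cast_eq_zero]

/-- generating set of `I` -/
private def DSet (R : Type*) [CommRing R] : Set (ZR R) :=
  {f | ∃ x y : R, f = MonoidAlgebra.of ℤ R x + MonoidAlgebra.of ℤ R y -
    MonoidAlgebra.of ℤ R (x + y)}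

open MonoidAlgebra in
private lemma I_le_spanD {R : Type*} [CommRing R] : Iid R ≤ Ideal.span (DSet R) := by
  intro f hf
  set J := Ideal.span (DSet R) with hJ
  have hrel : ∀ x y : R, of ℤ R x + of ℤ R y - of ℤ R (x + y) ∈ J :=
    fun x y => Ideal.subset_span ⟨x, y, rfl⟩
  have h0 : of ℤ R 0 ∈ J := by simpa using hrel 0 0
  have claim : ∀ g : ZR R, g - of ℤ R (piHom R g) ∈ J := by
    have addM : ∀ g h : ZR R, g - of ℤ R (piHom R g) ∈ J → h - of ℤ R (piHom R h) ∈ J →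
        (g + h) - of ℤ R (piHom R (g + h)) ∈ J := by
      intro g h hg hh
      have := J.add_mem (J.add_mem hg hh) (hrel (piHom R g) (piHom R h))
      rw [map_add]
      convert this using 1
      ring
    have negM : ∀ g : ZR R, g - of ℤ R (piHom R g) ∈ J → (-g) - of ℤ R (piHom R (-g)) ∈ J := by
      intro g hg
      have h2 := hrel (piHom R g) (-(piHom R g))
      rw [add_neg_cancel] at h2
      have := J.sub_mem (J.sub_mem (J.neg_mem hg) h2) h0
      rw [map_neg]
      convert this using 1
      ring
    intro g
    induction g using MonoidAlgebra.induction_on with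
    | of a => simp only [pi_of, sub_self]; exact J.zero_mem
    | add f g hf hg => exact addM f g hf hg
    | smul r f hf =>
      induction r using Int.induction_on with
      | zero => simpa using J.neg_mem h0
      | succ k ih =>
        have := addM _ _ ih hf
        rw [add_smul, one_smul] at *
        exact this
      | pred k ih =>
        have h3 : ((-(k:ℤ) - 1)) • f = (-(k:ℤ)) • f + -f := by
          rw [sub_smul, one_smul, sub_eq_add_neg]
        rw [h3]
        exact addM _ _ ih (negM f hf)
  have hf0 : piHom R f = 0 := hf
  have := claim f
  rw [hf0] at this
  simpa using J.add_mem this h0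

open MonoidAlgebra in
private lemma d_mem {R : Type*} [CommRing R] (p : ℕ) [Fact p.Prime] [CharP R p]
    (hs : Function.Surjective fun x : R => x ^ p) (x y : R) :
    of ℤ R x + of ℤ R y - of ℤ R (x + y) ∈ Ideal.span {(p : ZR R)} ⊔ (Iid R) ^ 2 := by
  obtain ⟨u, hu⟩ := hs x
  obtain ⟨v, hv⟩ := hs y
  simp only at hu hv
  have hx : of ℤ R x = (of ℤ R u) ^ p := by rw [← hu, map_pow]
  have hy : of ℤ R y = (of ℤ R v) ^ p := by rw [← hv, map_pow]
  have hxy : of ℤ R (x + y) = (of ℤ R (u + v)) ^ p := by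
    rw [← hu, ← hv, ← add_pow_char, map_pow]
  set A := of ℤ R u with hA
  set B := of ℤ R v with hB
  set C := of ℤ R (u + v) with hC
  obtain ⟨c, hc⟩ := exists_add_pow_prime_eq (Fact.out : p.Prime) A B
  set E : ZR R := ∑ i ∈ Finset.range p, (A + B) ^ i * C ^ (p - 1 - i) with hE
  have hgeom : E * ((A + B) - C) = (A + B) ^ p - C ^ p := geom_sum₂_mul (A + B) C p
  set g : ZR R := of ℤ R ((u + v) ^ (p - 1)) with hg
  have hEg : E - (p : ZR R) * g ∈ Iid R := by
    have hπE : piHom R E = p * (u + v) ^ (p - 1) := by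
      rw [hE, map_sum]
      have : ∀ i ∈ Finset.range p,
          piHom R ((A + B) ^ i * C ^ (p - 1 - i)) = (u + v) ^ (p - 1) := by
        intro i hi
        rw [map_mul, map_pow, map_pow, map_add, hA, hB, hC, pi_of, pi_of, pi_of,
          ← pow_add]
        congr 1
        have := Finset.mem_range.1 hi
        omega
      rw [Finset.sum_congr rfl this, Finset.sum_const, Finset.card_range, nsmul_eq_mul]
    simp [Iid, RingHom.mem_ker, map_sub, map_mul, map_natCast, hπE, hg, pi_of, pi_single]
  have hd : A + B - C ∈ Iid R := by
    rw [Iid, RingHom.mem_ker, map_sub, map_add, hA, hB, hC, pi_of, pi_of, pi_of]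
    ring
  have key : of ℤ R x + of ℤ R y - of ℤ R (x + y) =
      (E - (p : ZR R) * g) * (A + B - C) + (p : ZR R) * (g * (A + B - C) - A * B * c) := by
    rw [hx, hy, hxy]
    linear_combination -hgeom - hc
  rw [key]
  refine Submodule.add_mem _ (Submodule.mem_sup_right ?_) (Submodule.mem_sup_left ?_)
  · rw [pow_two]; exact Ideal.mul_mem_mul hEg hd
  · exact Ideal.mem_span_singleton.2 ⟨_, rfl⟩

private lemma I_le {R : Type*} [CommRing R] (p : ℕ) [Fact p.Prime] [CharP R p]
    (hs : Function.Surjective fun x : R => x ^ p) :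
    Iid R ≤ Ideal.span {(p : ZR R)} ⊔ (Iid R) ^ 2 := by
  refine le_trans I_le_spanD (Ideal.span_le.2 ?_)
  rintro f ⟨x, y, rfl⟩
  exact d_mem p hs x y

private lemma pow_le {R : Type*} [CommRing R] (p : ℕ) [Fact p.Prime] [CharP R p]
    (hs : Function.Surjective fun x : R => x ^ p) (n : ℕ) :
    (Iid R) ^ n ≤ Ideal.span {(p : ZR R) ^ n} ⊔ (Iid R) ^ (n + 1) := by
  have hPI : Ideal.span {(p : ZR R)} ≤ Iid R :=
    Ideal.span_le.2 (by simpa using p_mem_I p)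
  induction n with
  | zero => simp [Ideal.span_singleton_one]
  | succ n ih =>
    rw [← Ideal.span_singleton_pow] at *
    calc (Iid R) ^ (n + 1) = (Iid R) ^ n * Iid R := pow_succ _ _
      _ ≤ (Ideal.span {(p : ZR R)} ^ n ⊔ (Iid R) ^ (n + 1)) *
          (Ideal.span {(p : ZR R)} ⊔ (Iid R) ^ 2) := Ideal.mul_mono ih (I_le p hs)
      _ ≤ Ideal.span {(p : ZR R)} ^ (n + 1) ⊔ (Iid R) ^ (n + 2) := by
        rw [Ideal.sup_mul, Ideal.mul_sup, Ideal.mul_sup]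
        refine sup_le (sup_le ?_ ?_) (sup_le ?_ ?_)
        · rw [← pow_succ]; exact le_sup_left
        · refine le_trans (Ideal.mul_mono (Ideal.pow_right_mono hPI n) le_rfl) ?_
          rw [← pow_add]; exact le_sup_right
        · refine le_trans (Ideal.mul_mono le_rfl hPI) ?_
          rw [← pow_succ]; exact le_sup_right
        · rw [← pow_add]
          exact le_trans (Ideal.pow_le_pow_right (by omega)) le_sup_right

section Gen
variable {A : Type*} [CommRing A] {I : Ideal A}

private lemma Ceval_apply (ν : ℕ) (x : Clim A I) : Ceval A I ν x = x.1 ν := rfl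

private lemma Ceval_Cof (ν : ℕ) (a : A) :
    Ceval A I ν (CofRingHom A I a) = Ideal.Quotient.mk _ a := rfl

private lemma Clim_ext {x y : Clim A I} (h : ∀ ν, Ceval A I ν x = Ceval A I ν y) : x = y :=
  Subtype.ext (funext fun ν => h ν)

private lemma ker_anti {m ν : ℕ} (h : m ≤ ν) :
    RingHom.ker (Ceval A I ν) ≤ RingHom.ker (Ceval A I m) := by
  intro x hx
  rw [RingHom.mem_ker] at hx ⊢
  rw [Ceval_apply, ← x.2 h, ← Ceval_apply ν, hx, map_zero]

end Gen

private lemma approx {R : Type*} [CommRing R] (p : ℕ) [Fact p.Prime] [CharP R p]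
    (hs : Function.Surjective fun x : R => x ^ p) (m : ℕ) (x : CR R)
    (hx : x ∈ RingHom.ker (Ceval (ZR R) (Iid R) m)) :
    ∃ a : ZR R, x - (p : CR R) ^ m * CofRingHom (ZR R) (Iid R) a ∈
      RingHom.ker (Ceval (ZR R) (Iid R) (m + 1)) := by
  obtain ⟨b, hb⟩ := Ideal.Quotient.mk_surjective (Ceval (ZR R) (Iid R) (m + 1) x)
  have hbI : b ∈ (Iid R) ^ m := by
    rw [← Ideal.Quotient.eq_zero_iff_mem (I := (Iid R) ^ m)]
    have : Ideal.Quotient.factor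
        (Ideal.pow_le_pow_right (I := Iid R) (Nat.le_succ m)) (Ideal.Quotient.mk _ b) =
        Ideal.Quotient.mk _ b := Ideal.Quotient.factor_mk _ _
    rw [← this, hb, Ceval_apply, x.2 (Nat.le_succ m), ← Ceval_apply m x,
      RingHom.mem_ker.1 hx]
  obtain ⟨s, hsmem, j, hj, hsum⟩ := Submodule.mem_sup.1 (pow_le p hs m hbI)
  obtain ⟨a, rfl⟩ := Ideal.mem_span_singleton.1 hsmem
  refine ⟨a, ?_⟩
  rw [RingHom.mem_ker, map_sub, map_mul, map_pow, map_natCast, Ceval_Cof, ← hb,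
    ← map_natCast (Ideal.Quotient.mk ((Iid R) ^ (m+1))) p, ← map_pow, ← map_mul, ← map_sub,
    Ideal.Quotient.eq_zero_iff_mem]
  have : b - (p : ZR R) ^ m * a = j := by rw [← hsum]; ring
  rwa [this]

private lemma ker_eq {R : Type*} [CommRing R] (p : ℕ) [Fact p.Prime] [CharP R p]
    (hs : Function.Surjective fun x : R => x ^ p) (n : ℕ) :
    RingHom.ker (Ceval (ZR R) (Iid R) n) = Ideal.span {(p : CR R) ^ n} := by
  refine le_antisymm ?_ ?_
  · intro x hx
    have step : ∀ (K : ℕ) (s : ZR R),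
        x - (p : CR R) ^ n * CofRingHom (ZR R) (Iid R) s ∈
          RingHom.ker (Ceval (ZR R) (Iid R) (n + K)) →
        ∃ a : ZR R, x - (p : CR R) ^ n * CofRingHom (ZR R) (Iid R) (s + (p : ZR R) ^ K * a) ∈
          RingHom.ker (Ceval (ZR R) (Iid R) (n + K + 1)) := by
      intro K s h
      obtain ⟨a, ha⟩ := approx p hs (n + K) _ h
      refine ⟨a, ?_⟩
      have heq : x - (p : CR R) ^ n * CofRingHom (ZR R) (Iid R) (s + (p : ZR R) ^ K * a) =
          (x - (p : CR R) ^ n * CofRingHom (ZR R) (Iid R) s) -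
          (p : CR R) ^ (n + K) * CofRingHom (ZR R) (Iid R) a := by
        rw [map_add, map_mul, map_pow, map_natCast, pow_add]
        ring
      rw [heq]
      exact ha
    choose F hF using step
    let b : ∀ K : ℕ, {s : ZR R // x - (p : CR R) ^ n * CofRingHom (ZR R) (Iid R) s ∈
        RingHom.ker (Ceval (ZR R) (Iid R) (n + K))} := fun K =>
      Nat.rec ⟨0, by simpa using hx⟩
        (fun K prev => ⟨prev.1 + (p : ZR R) ^ K * F K prev.1 prev.2, hF K prev.1 prev.2⟩) K
    have hsucc : ∀ K, (b (K + 1)).1 = (b K).1 + (p : ZR R) ^ K * F K (b K).1 (b K).2 :=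
      fun _ => rfl
    have hdiff : ∀ m ν : ℕ, m ≤ ν → (b ν).1 - (b m).1 ∈ (Iid R) ^ m := by
      intro m ν h
      induction ν, h using Nat.le_induction with
      | base => simpa using Submodule.zero_mem _
      | succ ν hmν ih =>
        have hpν : (p : ZR R) ^ ν ∈ (Iid R) ^ m :=
          Ideal.pow_le_pow_right hmν (Ideal.pow_mem_pow (p_mem_I p) ν)
        have : (b (ν+1)).1 - (b m).1 =
            ((b ν).1 - (b m).1) + (p : ZR R) ^ ν * F ν (b ν).1 (b ν).2 := by
          rw [hsucc]; ring
        rw [this]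
        exact Submodule.add_mem _ ih (Ideal.mul_mem_right _ _ hpν)
    let y : CR R := ⟨fun ν => Ideal.Quotient.mk _ ((b ν).1), by
      intro m ν h
      rw [Ideal.Quotient.factor_mk, Ideal.Quotient.mk_eq_mk_iff_sub_mem]
      exact hdiff m ν h⟩
    have hxy : x = (p : CR R) ^ n * y := by
      refine Clim_ext fun ν => ?_
      have h1 := ker_anti (Nat.le_add_left ν n) (b ν).2
      rw [RingHom.mem_ker, map_sub, sub_eq_zero] at h1
      rw [h1, map_mul, map_mul]
      rfl
    exact Ideal.mem_span_singleton.2 ⟨y, hxy⟩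
  · rw [Ideal.span_le, Set.singleton_subset_iff, SetLike.mem_coe, RingHom.mem_ker,
      map_pow, map_natCast, ← map_natCast (Ideal.Quotient.mk ((Iid R) ^ n)) p, ← map_pow,
      Ideal.Quotient.eq_zero_iff_mem]
    exact Ideal.pow_mem_pow (p_mem_I p) n

/-- comparison map to Witt vectors -/
private noncomputable def PhiW (R : Type*) [CommRing R] (p : ℕ) [Fact p.Prime] :
    ZR R →+* WittVector p R :=
  (MonoidAlgebra.lift ℤ (WittVector p R) R (WittVector.teichmuller p)).toRingHom

open MonoidAlgebra in
private lemma constCoeff_PhiW {R : Type*} [CommRing R] (p : ℕ) [Fact p.Prime] :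
    (WittVector.constantCoeff).comp (PhiW R p) = piHom R := by
  apply MonoidAlgebra.ringHom_ext
  · intro b
    have h1 : (MonoidAlgebra.single (1:R) (b:ℤ)) = (b : ZR R) := by
      rw [← map_intCast (MonoidAlgebra.singleOneRingHom (R := ℤ) (M := R)) b, Int.cast_id]
      rfl
    rw [h1, map_intCast, map_intCast]
  · intro a
    show WittVector.constantCoeff (PhiW R p (of ℤ R a)) = piHom R (of ℤ R a)
    rw [pi_of]
    have : PhiW R p (of ℤ R a) = WittVector.teichmuller p a := by
      simp [PhiW]
    rw [this]
    exact WittVector.teichmuller_coeff_zero p a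

private lemma W_tf {R : Type*} [CommRing R] (p : ℕ) [Fact p.Prime] [CharP R p]
    [PerfectRing R p] (w : WittVector p R) (h : (p : WittVector p R) * w = 0) :
    w = 0 := by
  have hV : WittVector.verschiebung (WittVector.frobenius w) = 0 := by
    rw [WittVector.verschiebung_frobenius, mul_comm]
    exact h
  have hF : WittVector.frobenius w = (0 : WittVector p R) := by
    ext n
    have := congrArg (fun z : WittVector p R => z.coeff (n + 1)) hV
    simpa [WittVector.verschiebung_coeff_succ] using this
  have := (WittVector.frobenius_bijective p R).injective
  apply this
  rw [hF]
  exact (map_zero (WittVector.frobenius (p := p) (R := R))).symm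

private lemma map_I_le {R : Type*} [CommRing R] (p : ℕ) [Fact p.Prime] [CharP R p]
    [PerfectRing R p] :
    Ideal.map (PhiW R p) (Iid R) ≤ Ideal.span {(p : WittVector p R)} := by
  rw [Ideal.map_le_iff_le_comap]
  intro a ha
  rw [Ideal.mem_comap, Ideal.mem_span_singleton]
  have h0 : WittVector.constantCoeff (PhiW R p a) = 0 := by
    rw [← RingHom.comp_apply, constCoeff_PhiW]
    exact ha
  set w := PhiW R p a
  set u : WittVector p R := WittVector.mk p (fun n => w.coeff (n + 1)) with hu
  have hw : w = WittVector.verschiebung u := by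
    ext n
    cases n with
    | zero => rw [WittVector.verschiebung_coeff_zero]; exact h0
    | succ n => rw [WittVector.verschiebung_coeff_succ]; rfl
  obtain ⟨z, hz⟩ := (WittVector.frobenius_bijective p R).surjective u
  refine ⟨z, ?_⟩
  rw [hw, ← hz, WittVector.verschiebung_frobenius, mul_comm]

private lemma witt_cancel {R : Type*} [CommRing R] (p : ℕ) [Fact p.Prime] [CharP R p]
    [PerfectRing R p] (m : ℕ) (w : WittVector p R)
    (h : (p : WittVector p R) ^ m * w = 0) : w = 0 := by
  induction m with
  | zero => simpa using h
  | succ m ih =>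
    apply ih
    apply W_tf p
    rw [← h, pow_succ]
    ring

private lemma pi_eq_zero_of {R : Type*} [CommRing R] (p : ℕ) [Fact p.Prime] [CharP R p]
    [PerfectRing R p] (m : ℕ) (a : ZR R)
    (h : (p : ZR R) ^ m * a ∈ (Iid R) ^ (m + 1)) : piHom R a = 0 := by
  have h1 : PhiW R p ((p : ZR R) ^ m * a) ∈ Ideal.span {(p : WittVector p R)} ^ (m + 1) := by
    have := Ideal.mem_map_of_mem (PhiW R p) h
    rw [Ideal.map_pow] at this
    exact Ideal.pow_right_mono (map_I_le p) (m + 1) this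
  rw [Ideal.span_singleton_pow, Ideal.mem_span_singleton] at h1
  obtain ⟨w, hw⟩ := h1
  rw [map_mul, map_pow, map_natCast] at hw
  have h2 : (p : WittVector p R) ^ m * (PhiW R p a - (p : WittVector p R) * w) = 0 := by
    rw [mul_sub, hw, pow_succ]
    ring
  have h3 := witt_cancel p m _ h2
  have h4 : PhiW R p a = (p : WittVector p R) * w := by
    rwa [sub_eq_zero] at h3
  have : piHom R a = WittVector.constantCoeff (PhiW R p a) := by
    rw [← RingHom.comp_apply, constCoeff_PhiW]
  rw [this, h4, map_mul, map_natCast, CharP.cast_eq_zero, zero_mul]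

end CuntzDeningerAux


/-- Let `p` be a prime and `R` a perfect `𝔽_p`-algebra. Then `C(R)` is a
strict `p`-ring with residue ring `R`: `p` is not a zero divisor in `C(R)`; for every `n ≥ 1`
the ideal `Î^n = ker (C(R) → ℤR/I^n)` equals `p^n·C(R)`; and the map `π̄ : C(R) → R` induced
by `π` is surjective with kernel `p·C(R)`, i.e. `C(R)/p·C(R) ≅ R` via `π`. -/
theorem statement0 (p : ℕ) [Fact p.Prime] (R : Type*) [CommRing R] [CharP R p]
    (hperf : Function.Bijective fun x : R => x ^ p) :
    (∀ x : CR R, (p : CR R) * x = 0 → x = 0) ∧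
    (∀ n : ℕ, 1 ≤ n →
      RingHom.ker (Ceval (ZR R) (Iid R) n) = Ideal.span {(p : CR R) ^ n}) ∧
    Function.Surjective (CtoR R) ∧
    RingHom.ker (CtoR R) = Ideal.span {(p : CR R)} := by
  have hs : Function.Surjective fun x : R => x ^ p := hperf.2
  haveI : PerfectRing R p := ⟨hperf⟩
  have hCtoR : ∀ (x : CR R) (a : ZR R),
      Ideal.Quotient.mk ((Iid R) ^ 1) a = Ceval (ZR R) (Iid R) 1 x →
      CtoR R x = piHom R a := by
    intro x a ha
    show (Ideal.Quotient.lift (Iid R) (piHom R) (fun _ ha => ha))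
        (((Ideal.quotEquivOfEq (pow_one (Iid R))).toRingHom)
          (Ceval (ZR R) (Iid R) 1 x)) = piHom R a
    rw [← ha]
    simp [Ideal.quotEquivOfEq_mk, Ideal.Quotient.lift_mk]
    exact Ideal.Quotient.lift_mk _ _ _
  refine ⟨?_, fun n _ => ker_eq p hs n, ?_, ?_⟩
  · -- p is not a zero divisor
    intro x hx0
    have hall : ∀ n, x ∈ RingHom.ker (Ceval (ZR R) (Iid R) n) := by
      intro n
      induction n with
      | zero =>
        rw [ker_eq p hs 0]
        simp [Ideal.span_singleton_one]
      | succ n ih =>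
        rw [ker_eq p hs n, Ideal.mem_span_singleton] at ih
        obtain ⟨y, hy⟩ := ih
        have hpy : (p : CR R) ^ (n + 1) * y = 0 := by
          calc (p : CR R) ^ (n + 1) * y = (p : CR R) * ((p : CR R) ^ n * y) := by ring
            _ = (p : CR R) * x := by rw [← hy]
            _ = 0 := hx0
        obtain ⟨a, ha⟩ := Ideal.Quotient.mk_surjective (Ceval (ZR R) (Iid R) (n + 2) y)
        have hmem : (p : ZR R) ^ (n + 1) * a ∈ (Iid R) ^ (n + 2) := by
          rw [← Ideal.Quotient.eq_zero_iff_mem, map_mul, map_pow, map_natCast, ha]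
          have := congrArg (Ceval (ZR R) (Iid R) (n + 2)) hpy
          rw [map_mul, map_pow, map_natCast, map_zero] at this
          exact this
        have haI : a ∈ (Iid R) ^ 1 := by
          rw [pow_one]
          exact pi_eq_zero_of p (n + 1) a hmem
        have h1 : y ∈ RingHom.ker (Ceval (ZR R) (Iid R) 1) := by
          rw [RingHom.mem_ker, Ceval_apply, ← y.2 (show 1 ≤ n + 2 by omega),
            ← Ceval_apply (n + 2) y, ← ha, Ideal.Quotient.factor_mk,
            Ideal.Quotient.eq_zero_iff_mem]
          exact haI
        rw [ker_eq p hs 1, Ideal.mem_span_singleton] at h1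
        obtain ⟨z, hz⟩ := h1
        rw [ker_eq p hs (n + 1), Ideal.mem_span_singleton]
        exact ⟨z, by rw [hy, hz]; ring⟩
    refine Clim_ext fun ν => ?_
    rw [RingHom.mem_ker.1 (hall ν), map_zero]
  · -- surjectivity
    intro r
    refine ⟨CofRingHom (ZR R) (Iid R) (MonoidAlgebra.of ℤ R r), ?_⟩
    rw [hCtoR _ (MonoidAlgebra.of ℤ R r) rfl, pi_of]
  · -- kernel of CtoR
    have h1 : RingHom.ker (CtoR R) = RingHom.ker (Ceval (ZR R) (Iid R) 1) := by
      ext x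
      obtain ⟨a, ha⟩ := Ideal.Quotient.mk_surjective (Ceval (ZR R) (Iid R) 1 x)
      rw [RingHom.mem_ker, RingHom.mem_ker, hCtoR x a ha, ← ha,
        Ideal.Quotient.eq_zero_iff_mem, pow_one]
      exact Iff.rfl
    rw [h1, ker_eq p hs 1, pow_one]
end

section
/- Let p be a prime, R a perfect 𝔽_p-algebra, and n ≥ 1 an integer. If a ∈ ℤR satisfies p·a ∈ I^n, then a ∈ I^{n−1}. -/
open MonoidAlgebra

namespace Stmt1Aux

open WittVector

variable (p : ℕ) [Fact p.Prime] (R : Type*) [CommRing R]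

/-- Teichmüller-type ring homomorphism `ℤR → W(R)`. -/
noncomputable def theta : ZR R →+* WittVector p R :=
  (MonoidAlgebra.lift ℤ (WittVector p R) R (WittVector.teichmuller p)).toRingHom

variable {R}

lemma theta_single (r : R) :
    theta p R (MonoidAlgebra.single r (1 : ℤ)) = WittVector.teichmuller p r := by
  simp [theta]

lemma pi_single (r : R) (n : ℤ) : piHom R (MonoidAlgebra.single r n) = n • r := by
  simp [piHom]

lemma ghost0 (x : WittVector p R) : WittVector.ghostComponent 0 x = x.coeff 0 := by
  simp [WittVector.ghostComponent_apply, wittPolynomial_zero]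

lemma ghost0_theta (a : ZR R) :
    WittVector.ghostComponent 0 (theta p R a) = piHom R a := by
  have : (WittVector.ghostComponent (p := p) (R := R) 0).comp (theta p R) = piHom R := by
    refine MonoidAlgebra.ringHom_ext (fun b => ?_) (fun r => ?_)
    · have hb : (MonoidAlgebra.single (1 : R) b : ZR R) = ((b : ℤ) : ZR R) := by
        simp [MonoidAlgebra.intCast_def]
      rw [hb]
      simp [map_intCast]
    · rw [RingHom.comp_apply, theta_single, pi_single,
        WittVector.ghostComponent_teichmuller]
      simp
  exact RingHom.congr_fun this a

variable [CharP R p] [PerfectRing R p]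

lemma w_tf (x : WittVector p R) (h : (p : WittVector p R) * x = 0) : x = 0 := by
  have h' : x * (p : WittVector p R) = 0 := by rw [mul_comm]; exact h
  have hv : WittVector.verschiebung (WittVector.frobenius x) = 0 := by
    rw [WittVector.verschiebung_frobenius]; exact h'
  have hf : WittVector.frobenius x = 0 := by
    apply WittVector.ext
    intro n
    have := congrArg (fun y => WittVector.coeff y (n + 1)) hv
    simpa [WittVector.verschiebung_coeff_succ] using this
  have hb := (WittVector.frobenius_bijective p R).1
  apply hb
  rw [hf]
  exact (map_zero (WittVector.frobenius : WittVector p R →+* WittVector p R)).symm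

lemma w_div (x : WittVector p R) (h : x.coeff 0 = 0) :
    ∃ y : WittVector p R, x = (p : WittVector p R) * y := by
  set z : WittVector p R := WittVector.mk p (fun n => x.coeff (n + 1)) with hz
  have hvz : WittVector.verschiebung z = x := by
    apply WittVector.ext
    intro n
    cases n with
    | zero => rw [WittVector.verschiebung_coeff_zero, h]
    | succ m => rw [WittVector.verschiebung_coeff_succ]; rfl
  refine ⟨(WittVector.frobeniusEquiv p R).symm z, ?_⟩
  have hfz : WittVector.frobenius ((WittVector.frobeniusEquiv p R).symm z) = z := by
    have := (WittVector.frobeniusEquiv p R).apply_symm_apply z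
    exact this
  conv_lhs => rw [← hvz, ← hfz, WittVector.verschiebung_frobenius]
  rw [mul_comm]


section ZRside

variable {p}

/-- Generators of the ideal `I`. -/
def Sgen (R : Type*) [CommRing R] : Set (ZR R) :=
  {x | x = MonoidAlgebra.single (0 : R) (1 : ℤ) ∨
    ∃ a b : R, x = MonoidAlgebra.single (a + b) (1 : ℤ)
      - MonoidAlgebra.single a 1 - MonoidAlgebra.single b 1}

lemma int_single (r : R) (n : ℤ) :
    MonoidAlgebra.single r n - MonoidAlgebra.single (n • r) (1 : ℤ) ∈ Ideal.span (Sgen R) := by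
  induction n using Int.induction_on with
  | zero =>
    have h1 : MonoidAlgebra.single (0 : R) (1 : ℤ) ∈ Ideal.span (Sgen R) :=
      Ideal.subset_span (Or.inl rfl)
    have e : MonoidAlgebra.single r (0 : ℤ) - MonoidAlgebra.single ((0 : ℤ) • r) (1 : ℤ)
        = -MonoidAlgebra.single (0 : R) (1 : ℤ) := by
      rw [zero_smul]
      simp
    rw [e]
    exact neg_mem h1
  | succ i IH =>
    have hg : MonoidAlgebra.single ((i : ℤ) • r + r) (1 : ℤ)
        - MonoidAlgebra.single ((i : ℤ) • r) 1 - MonoidAlgebra.single r 1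
        ∈ Ideal.span (Sgen R) := Ideal.subset_span (Or.inr ⟨_, _, rfl⟩)
    have e1 : MonoidAlgebra.single r ((i : ℤ) + 1)
        = MonoidAlgebra.single r (i : ℤ) + MonoidAlgebra.single r 1 := MonoidAlgebra.single_add r (i : ℤ) 1
    have e2 : ((i : ℤ) + 1) • r = (i : ℤ) • r + r := by rw [add_smul, one_smul]
    have e : MonoidAlgebra.single r ((i : ℤ) + 1) - MonoidAlgebra.single (((i : ℤ) + 1) • r) 1
        = (MonoidAlgebra.single r (i : ℤ) - MonoidAlgebra.single ((i : ℤ) • r) 1)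
          - (MonoidAlgebra.single ((i : ℤ) • r + r) (1 : ℤ)
            - MonoidAlgebra.single ((i : ℤ) • r) 1 - MonoidAlgebra.single r 1) := by
      rw [e1, e2]; ring
    rw [e]
    exact sub_mem IH hg
  | pred i IH =>
    have hg : MonoidAlgebra.single ((-(i : ℤ) - 1) • r + r) (1 : ℤ)
        - MonoidAlgebra.single ((-(i : ℤ) - 1) • r) 1 - MonoidAlgebra.single r 1
        ∈ Ideal.span (Sgen R) := Ideal.subset_span (Or.inr ⟨_, _, rfl⟩)
    have e1 : MonoidAlgebra.single r (-(i : ℤ))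
        = MonoidAlgebra.single r (-(i : ℤ) - 1) + MonoidAlgebra.single r 1 := by
      rw [← MonoidAlgebra.single_add]
      norm_num
    have e2 : (-(i : ℤ)) • r = (-(i : ℤ) - 1) • r + r := by
      have h' : (-(i : ℤ)) = (-(i : ℤ) - 1) + 1 := by ring
      conv_lhs => rw [h']
      rw [add_smul, one_smul]
    have e : MonoidAlgebra.single r (-(i : ℤ) - 1)
          - MonoidAlgebra.single ((-(i : ℤ) - 1) • r) 1
        = (MonoidAlgebra.single r (-(i : ℤ)) - MonoidAlgebra.single ((-(i : ℤ)) • r) 1)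
          + (MonoidAlgebra.single ((-(i : ℤ) - 1) • r + r) (1 : ℤ)
            - MonoidAlgebra.single ((-(i : ℤ) - 1) • r) 1 - MonoidAlgebra.single r 1) := by
      rw [e1, e2]; ring
    rw [e]
    exact add_mem IH hg

lemma sub_single_pi_mem (a : ZR R) :
    a - MonoidAlgebra.single (piHom R a) (1 : ℤ) ∈ Ideal.span (Sgen R) := by
  induction a using MonoidAlgebra.induction with
  | zero =>
    rw [map_zero, zero_sub]
    have h1 : (MonoidAlgebra.single (0 : R) (1 : ℤ)) ∈ Ideal.span (Sgen R) :=
      Ideal.subset_span (Or.inl rfl)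
    exact neg_mem h1
  | single_add r b f _ _ IH =>
    have hpi : piHom R (MonoidAlgebra.single r b + f) = b • r + piHom R f := by
      rw [map_add, pi_single]
    have hg : MonoidAlgebra.single (b • r + piHom R f) (1 : ℤ)
        - MonoidAlgebra.single (b • r) 1 - MonoidAlgebra.single (piHom R f) 1
        ∈ Ideal.span (Sgen R) := Ideal.subset_span (Or.inr ⟨_, _, rfl⟩)
    have h1 := int_single r b
    have e : (MonoidAlgebra.single r b + f)
          - MonoidAlgebra.single (piHom R (MonoidAlgebra.single r b + f)) (1 : ℤ)
        = (MonoidAlgebra.single r b - MonoidAlgebra.single (b • r) 1)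
          + (f - MonoidAlgebra.single (piHom R f) 1)
          - (MonoidAlgebra.single (b • r + piHom R f) (1 : ℤ)
            - MonoidAlgebra.single (b • r) 1 - MonoidAlgebra.single (piHom R f) 1) := by
      rw [hpi]; abel
    rw [e]
    exact sub_mem (add_mem h1 IH) hg

lemma Iid_le_span : Iid R ≤ Ideal.span (Sgen R) := by
  intro a ha
  have h0 : piHom R a = 0 := by rwa [Iid, RingHom.mem_ker] at ha
  have h1 := sub_single_pi_mem a
  rw [h0] at h1
  have h2 : MonoidAlgebra.single (0 : R) (1 : ℤ) ∈ Ideal.span (Sgen R) :=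
    Ideal.subset_span (Or.inl rfl)
  have e : a = (a - MonoidAlgebra.single (0 : R) (1 : ℤ))
      + MonoidAlgebra.single (0 : R) (1 : ℤ) := by ring
  rw [e]
  exact add_mem h1 h2

variable (p) [CharP R p] [PerfectRing R p]

lemma p_mem : (p : ZR R) ∈ Iid R := by
  rw [Iid, RingHom.mem_ker, map_natCast]
  exact CharP.cast_eq_zero R p

lemma span_le_sup :
    Ideal.span (Sgen R) ≤ Ideal.span {(p : ZR R)} ⊔ Iid R ^ p := by
  rw [Ideal.span_le]
  rintro x (rfl | ⟨a, b, rfl⟩)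
  · have h0 : (MonoidAlgebra.single (0 : R) (1 : ℤ)) ∈ Iid R := by
      rw [Iid, RingHom.mem_ker, pi_single, smul_zero]
    have e : MonoidAlgebra.single (0 : R) (1 : ℤ)
        = MonoidAlgebra.single (0 : R) (1 : ℤ) ^ p := by
      rw [MonoidAlgebra.single_pow, zero_pow (Fact.out : p.Prime).ne_zero, one_pow]
    refine SetLike.mem_coe.mpr (Submodule.mem_sup_right ?_)
    rw [e]
    exact Ideal.pow_mem_pow h0 p
  · obtain ⟨s, hs⟩ := surjective_frobenius R p a
    obtain ⟨t, ht⟩ := surjective_frobenius R p b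
    rw [frobenius_def] at hs ht
    set u : ZR R := MonoidAlgebra.single s (1 : ℤ) with hu
    set v : ZR R := MonoidAlgebra.single t (1 : ℤ) with hv
    set d : ZR R := MonoidAlgebra.single (s + t) (1 : ℤ) - u - v with hdd
    have hd : d ∈ Iid R := by
      rw [Iid, RingHom.mem_ker, hdd, map_sub, map_sub, hu, hv, pi_single, pi_single, pi_single,
        one_smul, one_smul, one_smul]
      ring
    have hsum : MonoidAlgebra.single (s + t) (1 : ℤ) = (u + v) + d := by rw [hdd]; ring
    obtain ⟨c1, hc1⟩ := exists_add_pow_prime_eq (Fact.out : p.Prime) (u + v) d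
    obtain ⟨c2, hc2⟩ := exists_add_pow_prime_eq (Fact.out : p.Prime) u v
    have e0 : MonoidAlgebra.single (a + b) (1 : ℤ) = MonoidAlgebra.single (s + t) (1 : ℤ) ^ p := by
      rw [MonoidAlgebra.single_pow, one_pow, add_pow_char, hs, ht]
    have e1 : MonoidAlgebra.single a (1 : ℤ) = u ^ p := by
      rw [hu, MonoidAlgebra.single_pow, one_pow, hs]
    have e2 : MonoidAlgebra.single b (1 : ℤ) = v ^ p := by
      rw [hv, MonoidAlgebra.single_pow, one_pow, ht]
    have key : MonoidAlgebra.single (a + b) (1 : ℤ)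
          - MonoidAlgebra.single a 1 - MonoidAlgebra.single b 1
        = d ^ p + (p : ZR R) * ((u + v) * d * c1 + u * v * c2) := by
      rw [e0, e1, e2, hsum, hc1, hc2]; ring
    refine SetLike.mem_coe.mpr ?_
    rw [key]
    refine add_mem (Submodule.mem_sup_right (Ideal.pow_mem_pow hd p))
      (Submodule.mem_sup_left ?_)
    exact Ideal.mem_span_singleton.mpr (dvd_mul_right _ _)

lemma I_le (N : ℕ) : Iid R ≤ Ideal.span {(p : ZR R)} ⊔ Iid R ^ (N + 1) := by
  induction N with
  | zero =>
    refine le_trans (le_trans Iid_le_span (span_le_sup p)) (sup_le_sup_left ?_ _)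
    exact Ideal.pow_le_pow_right (Fact.out : p.Prime).one_lt.le
  | succ N IH =>
    refine le_trans IH (sup_le le_sup_left ?_)
    calc Iid R ^ (N + 1) = Iid R ^ N * Iid R := by rw [pow_succ]
      _ ≤ Iid R ^ N * (Ideal.span {(p : ZR R)} ⊔ Iid R ^ p) :=
          Ideal.mul_mono_right (le_trans Iid_le_span (span_le_sup p))
      _ = Iid R ^ N * Ideal.span {(p : ZR R)} ⊔ Iid R ^ N * Iid R ^ p := Ideal.mul_sup _ _ _
      _ ≤ Ideal.span {(p : ZR R)} ⊔ Iid R ^ (N + 1 + 1) := by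
          refine sup_le_sup Ideal.mul_le_right ?_
          rw [← pow_add]
          exact Ideal.pow_le_pow_right (by have := (Fact.out : p.Prime).two_le; omega)

lemma theta_pow (m : ℕ) (a : ZR R) (ha : a ∈ Iid R ^ m) :
    ∃ y, theta p R a = (p : WittVector p R) ^ m * y := by
  have hmap : Ideal.map (theta p R) (Iid R) ≤ Ideal.span {(p : WittVector p R)} := by
    rw [Ideal.map_le_iff_le_comap]
    intro x hx
    have hx0 : piHom R x = 0 := by rwa [Iid, RingHom.mem_ker] at hx
    have h0 : (theta p R x).coeff 0 = 0 := by
      rw [← ghost0, ghost0_theta, hx0]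
    obtain ⟨y, hy⟩ := w_div p (theta p R x) h0
    exact Ideal.mem_span_singleton.mpr ⟨y, hy⟩
  have h1 : theta p R a ∈ Ideal.map (theta p R) (Iid R ^ m) := Ideal.mem_map_of_mem _ ha
  rw [Ideal.map_pow] at h1
  have h2 : (Ideal.map (theta p R) (Iid R)) ^ m ≤ Ideal.span {(p : WittVector p R)} ^ m :=
    Ideal.pow_right_mono hmap m
  have h3 := h2 h1
  rw [Ideal.span_singleton_pow] at h3
  exact Ideal.mem_span_singleton.mp h3

lemma key : ∀ n : ℕ, ∀ a : ZR R,
    (∃ y, theta p R a = (p : WittVector p R) ^ n * y) → a ∈ Iid R ^ n := by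
  intro n
  induction n with
  | zero =>
    intro a _
    rw [pow_zero, Ideal.one_eq_top]
    trivial
  | succ n IH =>
    rintro a ⟨y, hy⟩
    have hpi : piHom R a = 0 := by
      rw [← ghost0_theta p a, hy, map_mul, map_pow, map_natCast,
        CharP.cast_eq_zero R p, zero_pow (Nat.succ_ne_zero n), zero_mul]
    have haI : a ∈ Iid R := by rw [Iid, RingHom.mem_ker]; exact hpi
    have hd := I_le p n haI
    rw [Submodule.mem_sup] at hd
    obtain ⟨y1, hy1, c, hc, hsum⟩ := hd
    obtain ⟨b, hb⟩ := Ideal.mem_span_singleton.mp hy1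
    obtain ⟨z, hz⟩ := theta_pow p (n + 1) c hc
    have ht : (p : WittVector p R) * theta p R b + theta p R c = theta p R a := by
      rw [← map_natCast (theta p R) p, ← map_mul, ← map_add, ← hb, hsum]
    rw [hy, hz] at ht
    have h0 : (p : WittVector p R)
        * (theta p R b - (p : WittVector p R) ^ n * y + (p : WittVector p R) ^ n * z) = 0 := by
      linear_combination ht
    have hzero := w_tf p _ h0
    have hθb : theta p R b = (p : WittVector p R) ^ n * (y - z) := by
      linear_combination hzero
    have hbI := IH b ⟨y - z, hθb⟩
    have hpb : (p : ZR R) * b ∈ Iid R ^ (n + 1) := by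
      rw [pow_succ']
      exact Ideal.mul_mem_mul (p_mem p) hbI
    rw [← hsum, hb]
    exact add_mem hpb hc

end ZRside

end Stmt1Aux

/-- Let `p` be a prime, `R` a perfect `𝔽_p`-algebra and `n ≥ 1` an integer.
If `a ∈ ℤR` satisfies `p·a ∈ I^n`, then `a ∈ I^(n-1)`. -/
theorem statement1 (p : ℕ) [Fact p.Prime] (R : Type*) [CommRing R] [CharP R p]
    (hperf : Function.Bijective fun x : R => x ^ p)
    (n : ℕ) (hn : 1 ≤ n) (a : ZR R) (h : (p : ZR R) * a ∈ Iid R ^ n) :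
    a ∈ Iid R ^ (n - 1) := by
  haveI : PerfectRing R p := by
    constructor
    have he : ⇑(frobenius R p) = fun x : R => x ^ p := funext fun x => frobenius_def p x
    exact hperf
  obtain ⟨m, rfl⟩ : ∃ m, n = m + 1 := ⟨n - 1, by omega⟩
  obtain ⟨y, hy⟩ := Stmt1Aux.theta_pow p (m + 1) _ h
  rw [map_mul, map_natCast] at hy
  have h0 : (p : WittVector p R)
      * (Stmt1Aux.theta p R a - (p : WittVector p R) ^ m * y) = 0 := by
    linear_combination hy
  have hθa := Stmt1Aux.w_tf p _ h0
  have : Stmt1Aux.theta p R a = (p : WittVector p R) ^ m * y := by linear_combination hθa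
  have hm := Stmt1Aux.key p m a ⟨y, this⟩
  simpa using hm
end

section
/- Let R be a commutative ring. The kernel I of the ring homomorphism π : ℤR → R is generated as a ℤ-module (equivalently, as an additive group) by the elements [r] + [s] − [r+s] for r, s ∈ R. -/
open MonoidAlgebra

lemma piHom_of (R : Type*) [CommRing R] (r : R) : piHom R (of ℤ R r) = r := by
  simp [piHom]

lemma piHom_single (R : Type*) [CommRing R] (r : R) :
    piHom R (MonoidAlgebra.single r (1:ℤ)) = r := by
  simpa [MonoidAlgebra.of_apply] using piHom_of R r

lemma gen_mem (R : Type*) [CommRing R] (r s : R) :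
    of ℤ R r + of ℤ R s - of ℤ R (r + s) ∈ AddSubgroup.closure
      {y : ZR R | ∃ r s : R, y = of ℤ R r + of ℤ R s - of ℤ R (r + s)} :=
  AddSubgroup.subset_closure ⟨r, s, rfl⟩

lemma zero_mem' (R : Type*) [CommRing R] :
    of ℤ R 0 ∈ AddSubgroup.closure
      {y : ZR R | ∃ r s : R, y = of ℤ R r + of ℤ R s - of ℤ R (r + s)} := by
  have := gen_mem R 0 0
  simpa using this

lemma smul_mem' (R : Type*) [CommRing R] (n : ℤ) (a : R) :
    n • of ℤ R a - of ℤ R (n • a) ∈ AddSubgroup.closure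
      {y : ZR R | ∃ r s : R, y = of ℤ R r + of ℤ R s - of ℤ R (r + s)} := by
  set S := AddSubgroup.closure
      {y : ZR R | ∃ r s : R, y = of ℤ R r + of ℤ R s - of ℤ R (r + s)}
  induction n using Int.induction_on with
  | zero => simpa using S.neg_mem (zero_mem' R)
  | succ n ih =>
      have key : ((n : ℤ) + 1) • of ℤ R a - of ℤ R (((n : ℤ) + 1) • a) =
          ((n : ℤ) • of ℤ R a - of ℤ R ((n : ℤ) • a)) +
          (of ℤ R a + of ℤ R ((n : ℤ) • a) - of ℤ R (a + (n : ℤ) • a)) := by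
        rw [add_smul, add_smul, one_smul, one_smul, add_comm a ((n : ℤ) • a)]
        ring
      rw [key]
      exact S.add_mem ih (gen_mem R a ((n : ℤ) • a))
  | pred n ih =>
      have key : (-(n : ℤ) - 1) • of ℤ R a - of ℤ R ((-(n : ℤ) - 1) • a) =
          ((-(n : ℤ)) • of ℤ R a - of ℤ R ((-(n : ℤ)) • a)) -
          (of ℤ R a + of ℤ R ((-(n : ℤ) - 1) • a) - of ℤ R (a + (-(n : ℤ) - 1) • a)) := by
        have : a + (-(n : ℤ) - 1) • a = (-(n : ℤ)) • a := by
          rw [sub_smul, one_smul]; ring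
        rw [this, sub_smul, one_smul]
        ring
      rw [key]
      exact S.sub_mem ih (gen_mem R a ((-(n : ℤ) - 1) • a))

lemma main_mem (R : Type*) [CommRing R] (x : ZR R) :
    x - of ℤ R (piHom R x) ∈ AddSubgroup.closure
      {y : ZR R | ∃ r s : R, y = of ℤ R r + of ℤ R s - of ℤ R (r + s)} := by
  set S := AddSubgroup.closure
      {y : ZR R | ∃ r s : R, y = of ℤ R r + of ℤ R s - of ℤ R (r + s)} with hS
  induction x using MonoidAlgebra.induction_on with
  | of g => simpa [piHom_of, piHom_single] using S.zero_mem
  | add f g hf hg =>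
      have key : f + g - of ℤ R (piHom R (f + g)) =
          (f - of ℤ R (piHom R f)) + (g - of ℤ R (piHom R g)) +
          (of ℤ R (piHom R f) + of ℤ R (piHom R g) -
            of ℤ R (piHom R f + piHom R g)) := by
        rw [map_add]; ring
      rw [key]
      exact S.add_mem (S.add_mem hf hg) (gen_mem R _ _)
  | smul n f hf =>
      have key : n • f - of ℤ R (piHom R (n • f)) =
          n • (f - of ℤ R (piHom R f)) +
          (n • of ℤ R (piHom R f) - of ℤ R (n • piHom R f)) := by
        rw [map_zsmul, smul_sub]; abel
      rw [key]
      exact S.add_mem (S.zsmul_mem hf n) (smul_mem' R n _)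

/-- For a commutative ring `R`, the kernel `I` of `π : ℤR → R` is generated,
as an additive group (equivalently as a `ℤ`-module), by the elements `[r] + [s] - [r+s]`. -/
theorem statement3 (R : Type*) [CommRing R] (x : ZR R) :
    x ∈ RingHom.ker (piHom R) ↔
      x ∈ AddSubgroup.closure
        {y : ZR R | ∃ r s : R, y = of ℤ R r + of ℤ R s - of ℤ R (r + s)} := by
  constructor
  · intro hx
    rw [RingHom.mem_ker] at hx
    have h := main_mem R x
    rw [hx] at h
    have := AddSubgroup.add_mem _ h (zero_mem' R)
    simpa using this
  · intro hx
    rw [RingHom.mem_ker]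
    refine AddSubgroup.closure_induction ?_ ?_ ?_ ?_ hx
    · rintro y ⟨r, s, rfl⟩
      simp [piHom_of, piHom_single, map_add, map_sub]
    · simp
    · intro a b _ _ ha hb
      simp [map_add, ha, hb]
    · intro a _ ha
      simp [map_neg, ha]
end

section
/- Let p be a prime and R a commutative ring with p·1_R = 0, and let I = ker(π : ℤR → R). Then for every n ≥ 1: (i) δ(I^n) ⊆ I^{n−1}, and (ii) if x, y ∈ ℤR and at least one of x, y lies in I^n, then δ(x+y) ≡ δ(x) + δ(y) mod I^n. -/
open MonoidAlgebra

/-- `F : ℤR → ℤR`, the ring homomorphism induced by the multiplicative map `r ↦ [r^p]`. -/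
noncomputable def Fr (p : ℕ) (R : Type*) [CommRing R] : ZR R →+* ZR R :=
  MonoidAlgebra.mapDomainRingHom ℤ (powMonoidHom p : R →* R)

/-- Multiplication by `p` is injective on `ℤR`. -/
theorem pcancel (p : ℕ) [Fact p.Prime] (R : Type*) [CommRing R] (z w : ZR R)
    (h : (p : ZR R) * z = (p : ZR R) * w) : z = w := by
  have hp : (p:ℤ) ≠ 0 := Int.natCast_ne_zero.2 (Fact.out : p.Prime).ne_zero
  have h' : (p:ℤ) • z = (p:ℤ) • w := by
    simpa [zsmul_eq_mul, Int.cast_natCast] using h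
  ext a
  have h2 : ((p:ℤ) • z).coeff a = ((p:ℤ) • w).coeff a := by rw [h']
  simp only [MonoidAlgebra.coeff_smul_apply, smul_eq_mul] at h2
  exact mul_left_cancel₀ hp h2

/-- `π ∘ F = Frobenius ∘ π`. -/
theorem piHom_Fr (p : ℕ) [Fact p.Prime] (R : Type*) [CommRing R] [CharP R p] :
    (piHom R).comp (Fr p R) = (frobenius R p).comp (piHom R) := by
  apply MonoidAlgebra.ringHom_ext
  · intro b
    simp [piHom, Fr, Finsupp.mapDomain_single, powMonoidHom_apply, one_pow, map_intCast]
  · intro a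
    simp [piHom, Fr, frobenius_def, powMonoidHom, Finsupp.mapDomain_single]

/-- `F` maps `I` into `I`. -/
theorem Fr_mem_Iid (p : ℕ) [Fact p.Prime] (R : Type*) [CommRing R] [CharP R p]
    {x : ZR R} (hx : x ∈ Iid R) : Fr p R x ∈ Iid R := by
  have h := RingHom.congr_fun (piHom_Fr p R) x
  simp only [RingHom.coe_comp, Function.comp_apply] at h
  rw [Iid, RingHom.mem_ker] at hx ⊢
  rw [h, hx, map_zero]

/-- Let `p` be a prime, `R` a commutative ring with `p·1_R = 0`,
`I = ker (π : ℤR → R)`, and `δ` the arithmetic derivation (`p·δ(x) = F(x) - x^p`). Then for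
every `n ≥ 1`: (i) `δ(I^n) ⊆ I^(n-1)`, and (ii) if at least one of `x, y` lies in `I^n` then
`δ(x+y) ≡ δ(x) + δ(y)  (mod I^n)`. -/
theorem statement6 (p : ℕ) [Fact p.Prime] (R : Type*) [CommRing R] [CharP R p]
    (δ : ZR R → ZR R) (hδ : ∀ x : ZR R, (p : ZR R) * δ x = Fr p R x - x ^ p)
    (n : ℕ) (hn : 1 ≤ n) :
    (∀ x ∈ Iid R ^ n, δ x ∈ Iid R ^ (n - 1)) ∧
    (∀ x y : ZR R, x ∈ Iid R ^ n ∨ y ∈ Iid R ^ n →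
      δ (x + y) - δ x - δ y ∈ Iid R ^ n) := by
  have hp : p.Prime := Fact.out
  -- Part (ii), for an arbitrary exponent m:
  have key : ∀ (m : ℕ) (x y : ZR R), x ∈ Iid R ^ m ∨ y ∈ Iid R ^ m →
      δ (x + y) - δ x - δ y ∈ Iid R ^ m := by
    intro m x y hxy
    set w : ZR R := ∑ k ∈ Finset.Ioo 0 p, x ^ k * y ^ (p - k) * ((p.choose k / p : ℕ) : ZR R)
      with hw_def
    have hw : δ (x + y) - δ x - δ y = -w := by
      apply pcancel p R
      have hb := add_pow_prime_eq' hp x y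
      have e : (p : ZR R) * (δ (x + y) - δ x - δ y) =
          (Fr p R (x + y) - (x + y) ^ p) - (Fr p R x - x ^ p) - (Fr p R y - y ^ p) := by
        rw [mul_sub, mul_sub, hδ, hδ, hδ]
      rw [e, map_add, hb, hw_def]
      ring
    rw [hw]
    apply neg_mem
    apply Submodule.sum_mem
    intro k hk
    rw [Finset.mem_Ioo] at hk
    rcases hxy with hx | hy
    · rw [mul_assoc]
      exact Ideal.mul_mem_right _ _ (Ideal.pow_mem_of_mem _ hx k hk.1)
    · rw [mul_comm (x ^ k) (y ^ (p - k)), mul_assoc]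
      exact Ideal.mul_mem_right _ _
        (Ideal.pow_mem_of_mem _ hy (p - k) (Nat.sub_pos_of_lt hk.2))
  -- Part (i): by induction on the exponent.
  have main : ∀ m : ℕ, ∀ x ∈ Iid R ^ (m + 1), δ x ∈ Iid R ^ m := by
    intro m
    induction m with
    | zero => intro x _; simp [Ideal.one_eq_top]
    | succ m ih =>
      intro x hx
      rw [pow_succ'] at hx
      have H : x ∈ Iid R ^ (m + 1 + 1) ∧ δ x ∈ Iid R ^ (m + 1) := by
        refine Submodule.mul_induction_on
          (C := fun z => z ∈ Iid R ^ (m + 1 + 1) ∧ δ z ∈ Iid R ^ (m + 1)) hx ?_ ?_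
        · intro a ha b hb
          constructor
          · rw [pow_succ']
            exact Ideal.mul_mem_mul ha hb
          · have e : (p : ZR R) * δ (a * b) = Fr p R a * Fr p R b - (a * b) ^ p := by
              rw [hδ, map_mul]
            have heq : δ (a * b) = Fr p R a * δ b + δ a * b ^ p := by
              apply pcancel p R
              linear_combination e - Fr p R a * hδ b - b ^ p * hδ a
            rw [heq]
            apply add_mem
            · rw [pow_succ']
              exact Ideal.mul_mem_mul (Fr_mem_Iid p R ha) (ih b hb)
            · exact Ideal.mul_mem_left _ _ (Ideal.pow_mem_of_mem _ hb p hp.pos)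
        · intro u v hu hv
          refine ⟨add_mem hu.1 hv.1, ?_⟩
          have hk := key (m + 1 + 1) u v (Or.inl hu.1)
          have : δ (u + v) = (δ (u + v) - δ u - δ v) + δ u + δ v := by ring
          rw [this]
          exact add_mem (add_mem (Ideal.pow_le_pow_right (Nat.le_succ _) hk) hu.2) hv.2
      exact H.2
  refine ⟨?_, key n⟩
  intro x hx
  obtain ⟨m, rfl⟩ : ∃ m, n = m + 1 := ⟨n - 1, (Nat.succ_pred_eq_of_pos hn).symm⟩
  simpa using main m x hx
end

section
/- Let p be a prime, R a perfect 𝔽_p-algebra, and n ≥ 0 an integer. Then the map R → I^n/I^{n+1} sending r to the class of p^n·[r] is a bijection, and it is additive: the class of p^n·[r+s] equals the class of p^n·[r] + p^n·[s] in I^n/I^{n+1}; hence it is an isomorphism of additive groups R ≅ I^n/I^{n+1}. -/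
set_option synthInstance.maxHeartbeats 1000000
set_option maxHeartbeats 1000000

open MonoidAlgebra

lemma p_mem_Iid (p : ℕ) (R : Type*) [CommRing R] [CharP R p] : (p : ZR R) ∈ Iid R := by
  have h : piHom R (p : ZR R) = 0 := by
    rw [map_natCast]; exact CharP.cast_eq_zero R p
  exact RingHom.mem_ker.mpr h

lemma pow_mul_single_mem_Iid_pow (p : ℕ) (R : Type*) [CommRing R] [CharP R p] (n : ℕ) (r : R) :
    (p : ZR R) ^ n * of ℤ R r ∈ Iid R ^ n :=
  Ideal.mul_mem_right _ _ (Ideal.pow_mem_pow (p_mem_Iid p R) n)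

/-- The map `R → I^n/I^(n+1)`, `r ↦ class of p^n·[r]`.  Here `I^n/I^(n+1)` is realized as the
quotient of the `ℤR`-module `I^n` by the submodule `I^(n+1) ⊆ I^n`. -/
noncomputable def pnMap (p : ℕ) (R : Type*) [CommRing R] [CharP R p] (n : ℕ) :
    R → (↥(Iid R ^ n) ⧸ (Submodule.comap (Iid R ^ n).subtype (Iid R ^ (n + 1)))) :=
  fun r => Submodule.Quotient.mk ⟨(p : ZR R) ^ n * of ℤ R r, pow_mul_single_mem_Iid_pow p R n r⟩

lemma mem_Iid_iff (R : Type*) [CommRing R] (x : ZR R) : x ∈ Iid R ↔ piHom R x = 0 :=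
  RingHom.mem_ker

/-- The ideal `(p) + I²`. -/
noncomputable def Jid (p : ℕ) (R : Type*) [CommRing R] : Ideal (ZR R) :=
  Ideal.span {(p : ZR R)} ⊔ Iid R ^ 2

lemma of_zero_mem_sq (R : Type*) [CommRing R] : of ℤ R (0 : R) ∈ Iid R ^ 2 := by
  have h0 : of ℤ R (0 : R) ∈ Iid R := by
    rw [mem_Iid_iff, piHom_of]
  have : of ℤ R (0 : R) = of ℤ R (0 : R) * of ℤ R (0 : R) := by
    rw [← map_mul, mul_zero]
  rw [this, pow_two]
  exact Ideal.mul_mem_mul h0 h0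

lemma of_zero_mem_Jid (p : ℕ) (R : Type*) [CommRing R] : of ℤ R (0 : R) ∈ Jid p R :=
  Ideal.mem_sup_right (of_zero_mem_sq R)

/-- The key lemma: for a semiperfect ring, the additivity defect `[a]+[b]-[a+b]`
lies in `(p) + I²`. -/
lemma defect_mem_Jid (p : ℕ) [Fact p.Prime] (R : Type*) [CommRing R] [CharP R p]
    (hsurj : Function.Surjective fun x : R => x ^ p) (a b : R) :
    of ℤ R a + of ℤ R b - of ℤ R (a + b) ∈ Jid p R := by
  have hp : p.Prime := Fact.out
  obtain ⟨α, hα⟩ := hsurj a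
  obtain ⟨β, hβ⟩ := hsurj b
  simp only at hα hβ
  set e : ZR R := of ℤ R α + of ℤ R β - of ℤ R (α + β) with he_def
  have he : e ∈ Iid R := by
    rw [mem_Iid_iff]
    rw [he_def]
    simp only [map_add, map_sub, piHom_of]
    ring
  obtain ⟨c₁, hc₁⟩ := exists_add_pow_prime_eq hp (of ℤ R α + of ℤ R β) (-e)
  obtain ⟨c₂, hc₂⟩ := exists_add_pow_prime_eq hp (of ℤ R α) (of ℤ R β)
  have hofab : of ℤ R (a + b) = (of ℤ R α + of ℤ R β + -e) ^ p := by
    have h1 : of ℤ R α + of ℤ R β + -e = of ℤ R (α + β) := by rw [he_def]; ring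
    rw [h1, ← map_pow, ← hα, ← hβ, ← add_pow_char]
  have key : of ℤ R a + of ℤ R b - of ℤ R (a + b)
      = -((p : ZR R) * ((of ℤ R α + of ℤ R β) * -e * c₁ + of ℤ R α * of ℤ R β * c₂)) - (-e) ^ p := by
    rw [hofab, hc₁, hc₂, ← map_pow, ← map_pow, hα, hβ]
    ring
  rw [key]
  unfold Jid
  apply sub_mem
  · apply neg_mem
    apply Ideal.mem_sup_left
    exact Ideal.mul_mem_right _ _ (Ideal.subset_span rfl)
  · apply Ideal.mem_sup_right
    have hp2 : 2 + (p - 2) = p := by have := hp.two_le; omega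
    have h2 : (-e) ^ p = (-e) ^ 2 * (-e) ^ (p - 2) := by
      rw [← pow_add, hp2]
    rw [h2]
    exact Ideal.mul_mem_right _ _ (Ideal.pow_mem_pow (neg_mem he) 2)

lemma mk_of_add (p : ℕ) [Fact p.Prime] (R : Type*) [CommRing R] [CharP R p]
    (hsurj : Function.Surjective fun x : R => x ^ p) (a b : R) :
    Ideal.Quotient.mk (Jid p R) (of ℤ R (a + b))
      = Ideal.Quotient.mk (Jid p R) (of ℤ R a) + Ideal.Quotient.mk (Jid p R) (of ℤ R b) := by
  have h := Ideal.Quotient.eq_zero_iff_mem.mpr (defect_mem_Jid p R hsurj a b)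
  rw [map_sub, map_add, sub_eq_zero] at h
  exact h.symm

lemma mk_of_zero (p : ℕ) [Fact p.Prime] (R : Type*) [CommRing R] [CharP R p] :
    Ideal.Quotient.mk (Jid p R) (of ℤ R (0 : R)) = 0 :=
  Ideal.Quotient.eq_zero_iff_mem.mpr (of_zero_mem_Jid p R)

lemma mk_of_neg (p : ℕ) [Fact p.Prime] (R : Type*) [CommRing R] [CharP R p]
    (hsurj : Function.Surjective fun x : R => x ^ p) (a : R) :
    Ideal.Quotient.mk (Jid p R) (of ℤ R (-a)) = -Ideal.Quotient.mk (Jid p R) (of ℤ R a) := by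
  have h := mk_of_add p R hsurj a (-a)
  rw [add_neg_cancel, mk_of_zero] at h
  exact eq_neg_of_add_eq_zero_right h.symm

lemma mk_of_zsmul (p : ℕ) [Fact p.Prime] (R : Type*) [CommRing R] [CharP R p]
    (hsurj : Function.Surjective fun x : R => x ^ p) (m : ℤ) (a : R) :
    Ideal.Quotient.mk (Jid p R) (of ℤ R (m • a))
      = m • Ideal.Quotient.mk (Jid p R) (of ℤ R a) := by
  induction m using Int.induction_on with
  | zero => simpa using mk_of_zero p R
  | succ k ih =>
      have : ((k : ℤ) + 1) • a = (k : ℤ) • a + a := by rw [add_smul, one_smul]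
      rw [this, mk_of_add p R hsurj, ih, add_smul, one_smul]
  | pred k ih =>
      have : (-(k : ℤ) - 1) • a = (-(k : ℤ)) • a + (-a) := by rw [sub_smul, one_smul, neg_smul]; ring
      rw [this, mk_of_add p R hsurj, ih, mk_of_neg p R hsurj, sub_smul, one_smul, neg_smul]
      ring

lemma mk_eq_mk_of_piHom (p : ℕ) [Fact p.Prime] (R : Type*) [CommRing R] [CharP R p]
    (hsurj : Function.Surjective fun x : R => x ^ p) (x : ZR R) :
    Ideal.Quotient.mk (Jid p R) x = Ideal.Quotient.mk (Jid p R) (of ℤ R (piHom R x)) := by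
  induction x using MonoidAlgebra.induction_on with
  | of g => rw [piHom_of]
  | add f g hf hg =>
      rw [map_add, map_add, hf, hg, ← mk_of_add p R hsurj]
  | smul m f hf =>
      rw [map_zsmul (Ideal.Quotient.mk (Jid p R)), hf, map_zsmul (piHom R)]
      exact (mk_of_zsmul p R hsurj m _).symm

lemma Iid_le_Jid (p : ℕ) [Fact p.Prime] (R : Type*) [CommRing R] [CharP R p]
    (hsurj : Function.Surjective fun x : R => x ^ p) : Iid R ≤ Jid p R := by
  intro x hx
  have h := mk_eq_mk_of_piHom p R hsurj x
  rw [(mem_Iid_iff R x).mp hx, mk_of_zero] at h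
  exact Ideal.Quotient.eq_zero_iff_mem.mp h

lemma Iid_pow_le (p : ℕ) [Fact p.Prime] (R : Type*) [CommRing R] [CharP R p]
    (hsurj : Function.Surjective fun x : R => x ^ p) (n : ℕ) :
    Iid R ^ n ≤ Ideal.span {(p : ZR R) ^ n} ⊔ Iid R ^ (n + 1) := by
  induction n with
  | zero =>
      rw [pow_zero, pow_zero, Ideal.span_singleton_one, Ideal.one_eq_top]
      exact le_sup_left
  | succ n ih =>
      have step : Iid R ^ (n + 1) ≤ (Ideal.span {(p : ZR R) ^ n} ⊔ Iid R ^ (n + 1)) * Jid p R := by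
        rw [pow_succ]
        exact Ideal.mul_mono ih (Iid_le_Jid p R hsurj)
      refine step.trans ?_
      rw [Jid, Ideal.mul_sup, Ideal.sup_mul, Ideal.sup_mul]
      have hpn : Ideal.span {(p : ZR R) ^ n} ≤ Iid R ^ n := by
        rw [Ideal.span_le, Set.singleton_subset_iff]
        exact Ideal.pow_mem_pow (p_mem_Iid p R) n
      have h1 : Ideal.span {(p : ZR R) ^ n} * Ideal.span {(p : ZR R)}
          ≤ Ideal.span {(p : ZR R) ^ (n + 1)} := by
        rw [Ideal.span_singleton_mul_span_singleton, ← pow_succ]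
      have h2 : Ideal.span {(p : ZR R) ^ n} * Iid R ^ 2 ≤ Iid R ^ (n + 2) := by
        calc Ideal.span {(p : ZR R) ^ n} * Iid R ^ 2 ≤ Iid R ^ n * Iid R ^ 2 :=
              Ideal.mul_mono_left hpn
          _ = Iid R ^ (n + 2) := by rw [← pow_add]
      have h3 : Iid R ^ (n + 1) * Ideal.span {(p : ZR R)} ≤ Iid R ^ (n + 2) := by
        have : Ideal.span {(p : ZR R)} ≤ Iid R := by
          rw [Ideal.span_le, Set.singleton_subset_iff]
          exact p_mem_Iid p R
        calc Iid R ^ (n + 1) * Ideal.span {(p : ZR R)} ≤ Iid R ^ (n + 1) * Iid R :=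
              Ideal.mul_mono_right this
          _ = Iid R ^ (n + 2) := by rw [← pow_succ]
      have h4 : Iid R ^ (n + 1) * Iid R ^ 2 ≤ Iid R ^ (n + 2) := by
        rw [← pow_add]
        exact Ideal.pow_le_pow_right (by omega)
      refine sup_le (sup_le ?_ ?_) (sup_le ?_ ?_)
      · exact h1.trans le_sup_left
      · exact h3.trans le_sup_right
      · exact h2.trans le_sup_right
      · exact h4.trans le_sup_right

/-! ### Witt vector side (for injectivity) -/

section Witt
variable (p : ℕ) [Fact p.Prime] (R : Type*) [CommRing R] [CharP R p]

/-- `θ : ℤR → W(R)`, `[r] ↦ Teichmüller lift`. -/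
noncomputable def theta : ZR R →+* WittVector p R :=
  (MonoidAlgebra.lift ℤ (WittVector p R) R (WittVector.teichmuller p)).toRingHom

lemma theta_of (r : R) : theta p R (of ℤ R r) = WittVector.teichmuller p r := by
  simp [theta]

lemma ghostComponent_zero_eq (x : WittVector p R) :
    WittVector.ghostComponent 0 x = x.coeff 0 := by
  rw [WittVector.ghostComponent_apply, wittPolynomial_zero, MvPolynomial.aeval_X]

lemma ghost_zero_theta (x : ZR R) :
    (theta p R x).coeff 0 = piHom R x := by
  rw [← ghostComponent_zero_eq]
  induction x using MonoidAlgebra.induction_on with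
  | of g => rw [theta_of, ghostComponent_zero_eq, WittVector.teichmuller_coeff_zero, piHom_of]
  | add f g hf hg => rw [map_add, map_add, map_add, hf, hg]
  | smul m f hf => rw [map_zsmul, map_zsmul, map_zsmul, hf]

/-- A Witt vector with vanishing 0th coefficient is a Verschiebung. -/
lemma exists_verschiebung (w : WittVector p R) (h : w.coeff 0 = 0) :
    ∃ z, WittVector.verschiebung z = w := by
  refine ⟨WittVector.mk p (fun i => w.coeff (i + 1)), ?_⟩
  ext i
  cases i with
  | zero => rw [WittVector.verschiebung_coeff_zero, h]
  | succ i => rw [WittVector.verschiebung_coeff_succ, WittVector.coeff_mk]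

/-- The set of `x` with `θ x ∈ V^m W(R)`, as an ideal. -/
noncomputable def Vd (m : ℕ) : Ideal (ZR R) where
  carrier := {x | ∃ y, theta p R x = (⇑WittVector.verschiebung)^[m] y}
  add_mem' := by
    rintro a b ⟨y, hy⟩ ⟨z, hz⟩
    exact ⟨y + z, by
      rw [map_add, hy, hz, iterate_map_add WittVector.verschiebung m]⟩
  zero_mem' := ⟨0, by
    rw [map_zero]
    exact (Function.iterate_fixed (WittVector.verschiebung.map_zero) m).symm⟩
  smul_mem' := by
    rintro c x ⟨y, hy⟩
    refine ⟨y * (⇑WittVector.frobenius)^[m] (theta p R c), ?_⟩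
    rw [smul_eq_mul, map_mul, hy, mul_comm]
    exact WittVector.iterate_verschiebung_mul_left y (theta p R c) m

lemma Iid_pow_le_Vd (m : ℕ) : Iid R ^ m ≤ Vd p R m := by
  induction m with
  | zero => exact fun x _ => ⟨theta p R x, rfl⟩
  | succ m ih =>
      rw [pow_succ]
      refine Ideal.mul_le.mpr fun r hr s hs => ?_
      obtain ⟨y, hy⟩ := ih hr
      have hs0 : (theta p R s).coeff 0 = 0 := by
        rw [ghost_zero_theta]; exact RingHom.mem_ker.mp hs
      obtain ⟨z, hz⟩ := exists_verschiebung p R _ hs0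
      refine ⟨(⇑WittVector.frobenius)^[1] y * (⇑WittVector.frobenius)^[m] z, ?_⟩
      rw [map_mul, hy, ← hz]
      have : WittVector.verschiebung z = (⇑WittVector.verschiebung)^[1] z := rfl
      rw [this, WittVector.iterate_verschiebung_mul]

lemma iterate_verschiebung_coeff_lt (m : ℕ) (y : WittVector p R) (k : ℕ) (h : k < m) :
    ((⇑WittVector.verschiebung)^[m] y).coeff k = 0 := by
  induction m generalizing k with
  | zero => omega
  | succ m ih =>
      rw [Function.iterate_succ_apply']
      cases k with
      | zero => exact WittVector.verschiebung_coeff_zero _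
      | succ k => rw [WittVector.verschiebung_coeff_succ]; exact ih k (by omega)

lemma mul_pow_p_coeff (k : ℕ) (x : WittVector p R) :
    (x * (p : WittVector p R) ^ k).coeff k = x.coeff 0 ^ p ^ k := by
  induction k with
  | zero => rw [pow_zero, mul_one, pow_zero, pow_one]
  | succ k ih =>
      have : x * (p : WittVector p R) ^ (k + 1) = x * (p : WittVector p R) ^ k * p := by
        rw [pow_succ, mul_assoc]
      rw [this, WittVector.mul_charP_coeff_succ, ih, ← pow_mul, ← pow_succ]

end Witt

lemma pow_pow_eq_zero (p : ℕ) [Fact p.Prime] (R : Type*) [CommRing R]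
    (hinj : Function.Injective fun x : R => x ^ p) (m : ℕ) (x : R) (h : x ^ p ^ m = 0) :
    x = 0 := by
  induction m generalizing x with
  | zero => rwa [pow_zero, pow_one] at h
  | succ m ih =>
      apply ih
      apply hinj
      show (x ^ p ^ m) ^ p = (0 : R) ^ p
      rw [← pow_mul, ← pow_succ, h, zero_pow (Nat.Prime.ne_zero Fact.out)]


/-- Let `p` be a prime, `R` a perfect `𝔽_p`-algebra and `n ≥ 0`. The map
`R → I^n/I^(n+1)` sending `r` to the class of `p^n·[r]` is bijective and additive; hence it is
an isomorphism of additive groups `R ≅ I^n/I^(n+1)`. -/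
theorem statement7 (p : ℕ) [Fact p.Prime] (R : Type*) [CommRing R] [CharP R p]
    (hperf : Function.Bijective fun x : R => x ^ p) (n : ℕ) :
    Function.Bijective (pnMap p R n) ∧
    ∀ r s : R, pnMap p R n (r + s) = pnMap p R n r + pnMap p R n s := by
  constructor
  · constructor
    · -- injectivity
      intro r s h
      have hd : (p : ZR R) ^ n * of ℤ R r - (p : ZR R) ^ n * of ℤ R s ∈ Iid R ^ (n + 1) := by
        have h2 := (Submodule.Quotient.eq _).mp h
        simpa using h2
      obtain ⟨y, hy⟩ := Iid_pow_le_Vd p R (n + 1) hd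
      have hth : theta p R ((p : ZR R) ^ n * of ℤ R r - (p : ZR R) ^ n * of ℤ R s)
          = (WittVector.teichmuller p r - WittVector.teichmuller p s)
              * (p : WittVector p R) ^ n := by
        rw [map_sub, map_mul, map_mul, map_pow, map_natCast, theta_of, theta_of]
        ring
      have hcoeff : ((WittVector.teichmuller p r - WittVector.teichmuller p s)
          * (p : WittVector p R) ^ n).coeff n = 0 := by
        rw [← hth, hy]
        exact iterate_verschiebung_coeff_lt p R (n + 1) y n (by omega)
      rw [mul_pow_p_coeff] at hcoeff
      have h0 : (WittVector.teichmuller p r - WittVector.teichmuller p s).coeff 0 = r - s := by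
        rw [← ghostComponent_zero_eq, map_sub, ghostComponent_zero_eq, ghostComponent_zero_eq,
          WittVector.teichmuller_coeff_zero, WittVector.teichmuller_coeff_zero]
      rw [h0] at hcoeff
      have := pow_pow_eq_zero p R hperf.1 n (r - s) hcoeff
      exact sub_eq_zero.mp this
    · -- surjectivity
      intro q
      obtain ⟨⟨x, hx⟩, rfl⟩ := Submodule.Quotient.mk_surjective _ q
      have hx2 := Iid_pow_le p R hperf.2 n hx
      obtain ⟨u, hu, v, hv, huv⟩ := Submodule.mem_sup.mp hx2
      obtain ⟨c, hc⟩ := Ideal.mem_span_singleton'.mp hu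
      refine ⟨piHom R c, ?_⟩
      unfold pnMap
      rw [Submodule.Quotient.eq]
      show (p : ZR R) ^ n * of ℤ R (piHom R c) - x ∈ Iid R ^ (n + 1)
      have heq : (p : ZR R) ^ n * of ℤ R (piHom R c) - x
          = (p : ZR R) ^ n * (of ℤ R (piHom R c) - c) - v := by
        rw [← huv, ← hc]; ring
      rw [heq]
      refine sub_mem ?_ hv
      rw [pow_succ]
      refine Ideal.mul_mem_mul (Ideal.pow_mem_pow (p_mem_Iid p R) n) ?_
      rw [mem_Iid_iff]
      simp only [map_sub, piHom_of, sub_self]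
  · -- additivity
    intro r s
    unfold pnMap
    rw [← Submodule.Quotient.mk_add, Submodule.Quotient.eq]
    show (p : ZR R) ^ n * of ℤ R (r + s)
        - ((p : ZR R) ^ n * of ℤ R r + (p : ZR R) ^ n * of ℤ R s) ∈ Iid R ^ (n + 1)
    have heq : (p : ZR R) ^ n * of ℤ R (r + s)
        - ((p : ZR R) ^ n * of ℤ R r + (p : ZR R) ^ n * of ℤ R s)
        = -((p : ZR R) ^ n * (of ℤ R r + of ℤ R s - of ℤ R (r + s))) := by ring
    rw [heq]
    apply neg_mem
    rw [pow_succ]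
    refine Ideal.mul_mem_mul (Ideal.pow_mem_pow (p_mem_Iid p R) n) ?_
    rw [mem_Iid_iff]
    simp only [map_add, map_sub, piHom_of]
    ring
end

section
/- Let p be a prime and K a perfect field of characteristic p. Then C(K) is a discrete valuation ring of characteristic 0 whose maximal ideal is generated by p and whose residue field C(K)/p·C(K) is isomorphic to K via the map induced by π. -/
set_option synthInstance.maxHeartbeats 1000000
set_option maxHeartbeats 1000000

open MonoidAlgebra

section Aux

variable (p : ℕ) [Fact p.Prime] (K : Type*) [Field K] [CharP K p]

lemma piHom_single_s9 (r : K) : piHom K (single r 1) = r := by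
  simp [piHom, MonoidAlgebra.lift_single]

/-- Teichmüller-type homomorphism `ℤK → W(K)`. -/
noncomputable def wHom : ZR K →+* WittVector p K :=
  (MonoidAlgebra.lift ℤ (WittVector p K) K (WittVector.teichmuller p)).toRingHom

lemma wHom_single (r : K) : wHom p K (single r 1) = WittVector.teichmuller p r := by
  simp [wHom, MonoidAlgebra.lift_single]

lemma single_one_intCast (b : ℤ) : (single 1 b : ZR K) = (b : ZR K) := by
  simp [MonoidAlgebra.intCast_def]

lemma constantCoeff_wHom (x : ZR K) :
    WittVector.constantCoeff (wHom p K x) = piHom K x := by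
  have h : (WittVector.constantCoeff).comp (wHom p K) = piHom K := by
    apply MonoidAlgebra.ringHom_ext
    · intro b
      rw [single_one_intCast]
      simp only [RingHom.coe_comp, Function.comp_apply, map_intCast]
    · intro a
      simp [wHom_single, piHom_single_s9, WittVector.constantCoeff_apply]
  exact RingHom.congr_fun h x

lemma p_mem_Iid_s9 : (p : ZR K) ∈ Iid K := by
  rw [Iid, RingHom.mem_ker, map_natCast]
  exact CharP.cast_eq_zero K p

lemma constantCoeff_p : WittVector.constantCoeff (p : WittVector p K) = 0 := by
  rw [map_natCast]; exact CharP.cast_eq_zero K p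

variable [PerfectRing K p]

lemma mem_span_p_of_cc_zero (x : WittVector p K)
    (hx : WittVector.constantCoeff x = 0) : x ∈ Ideal.span {(p : WittVector p K)} := by
  rcases eq_or_ne x 0 with rfl | hx0
  · exact Ideal.zero_mem _
  obtain ⟨m, b, hb, rfl⟩ := WittVector.exists_eq_pow_p_mul x hx0
  cases m with
  | zero =>
    exfalso
    apply hb
    simpa [WittVector.constantCoeff_apply] using hx
  | succ m =>
    rw [Ideal.mem_span_singleton]
    exact ⟨(p : WittVector p K) ^ m * b, by ring⟩

lemma wHom_I_mem (x : ZR K) (hx : x ∈ Iid K) :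
    wHom p K x ∈ Ideal.span {(p : WittVector p K)} := by
  apply mem_span_p_of_cc_zero
  rw [constantCoeff_wHom]
  exact hx

lemma wHom_pow_dvd (ν : ℕ) (x : ZR K) (hx : x ∈ (Iid K) ^ ν) :
    (p : WittVector p K) ^ ν ∣ wHom p K x := by
  rw [← Ideal.mem_span_singleton, ← Ideal.span_singleton_pow]
  have h1 : Ideal.map (wHom p K) ((Iid K) ^ ν) ≤ (Ideal.span {(p : WittVector p K)}) ^ ν := by
    rw [Ideal.map_pow]
    apply Ideal.pow_right_mono
    rw [Ideal.map_le_iff_le_comap]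
    intro y hy
    exact wHom_I_mem p K y hy
  exact h1 (Ideal.mem_map_of_mem _ hx)

lemma cancel_pow_p (ν : ℕ) (a : ZR K) (h : (p : ZR K) ^ ν * a ∈ (Iid K) ^ (ν + 1)) :
    a ∈ Iid K := by
  have hd := wHom_pow_dvd p K (ν + 1) _ h
  rw [map_mul, map_pow, map_natCast] at hd
  have hpne : (p : WittVector p K) ≠ 0 := WittVector.p_nonzero p K
  have hdvd : (p : WittVector p K) ∣ wHom p K a := by
    obtain ⟨c, hc⟩ := hd
    refine ⟨c, ?_⟩
    have := hc
    rw [pow_succ, mul_assoc] at this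
    exact mul_left_cancel₀ (pow_ne_zero ν hpne) this
  obtain ⟨c, hc⟩ := hdvd
  rw [Iid, RingHom.mem_ker, ← constantCoeff_wHom p K, hc, map_mul, constantCoeff_p, zero_mul]

lemma pow_p_not_mem (ν : ℕ) : (p : ZR K) ^ ν ∉ (Iid K) ^ (ν + 1) := by
  intro h
  have h1 : (1 : ZR K) ∈ Iid K := cancel_pow_p p K ν 1 (by simpa using h)
  rw [Iid, RingHom.mem_ker, map_one] at h1
  exact one_ne_zero h1

lemma intCast_pow_dvd (ν : ℕ) (k : ℤ) (h : (p : WittVector p K) ^ ν ∣ (k : WittVector p K)) :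
    (p : ℤ) ^ ν ∣ k := by
  induction ν generalizing k with
  | zero => simp
  | succ ν ih =>
    obtain ⟨c, hc⟩ := h
    have hk : (p : ℤ) ∣ k := by
      have h0 : ((k : ℤ) : K) = 0 := by
        have := congrArg WittVector.constantCoeff hc
        rw [map_intCast, map_mul, map_pow, constantCoeff_p] at this
        simpa [zero_pow (Nat.succ_ne_zero ν)] using this
      rwa [CharP.intCast_eq_zero_iff K p] at h0
    obtain ⟨k', rfl⟩ := hk
    have hpne : (p : WittVector p K) ≠ 0 := WittVector.p_nonzero p K
    have hc' : (k' : WittVector p K) = (p : WittVector p K) ^ ν * c := by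
      apply mul_left_cancel₀ hpne
      push_cast at hc ⊢
      rw [hc]; ring
    have hih := ih k' ⟨c, hc'⟩
    rw [pow_succ']
    exact mul_dvd_mul_left _ hih

end Aux

section Gen

variable (p : ℕ) [Fact p.Prime] (K : Type*) [Field K] [CharP K p]

/-- The additive-relation generators of `I`. -/
def genSet : Set (ZR K) :=
  {x | ∃ r s : K, x = single r 1 + single s 1 - single (r + s) 1}

lemma span_genSet_le : Ideal.span (genSet K) ≤ Iid K := by
  rw [Ideal.span_le]
  rintro x ⟨r, s, rfl⟩
  rw [SetLike.mem_coe, Iid, RingHom.mem_ker]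
  simp [piHom_single_s9]

/-- The ring homomorphism `K → ℤK ⧸ span(genSet)`, `r ↦ [r]`. -/
noncomputable def phiHom : K →+* ZR K ⧸ Ideal.span (genSet K) where
  toFun r := Ideal.Quotient.mk _ (single r 1)
  map_one' := by
    show Ideal.Quotient.mk _ (single (1:K) (1:ℤ)) = 1
    rw [← MonoidAlgebra.one_def, map_one]
  map_mul' r s := by
    show Ideal.Quotient.mk _ (single (r * s) (1:ℤ)) =
      Ideal.Quotient.mk _ (single r (1:ℤ)) * Ideal.Quotient.mk _ (single s (1:ℤ))
    rw [← map_mul, MonoidAlgebra.single_mul_single, one_mul]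
  map_zero' := by
    show Ideal.Quotient.mk _ (single (0:K) (1:ℤ)) = 0
    rw [Ideal.Quotient.eq_zero_iff_mem]
    have : (single (0:K) (1:ℤ) : ZR K) =
        single (0:K) 1 + single (0:K) 1 - single ((0:K) + 0) 1 := by
      rw [add_zero]; ring
    rw [this]
    exact Ideal.subset_span ⟨0, 0, rfl⟩
  map_add' r s := by
    show Ideal.Quotient.mk _ (single (r + s) (1:ℤ)) =
      Ideal.Quotient.mk _ (single r (1:ℤ)) + Ideal.Quotient.mk _ (single s (1:ℤ))
    rw [← map_add, Ideal.Quotient.eq]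
    have : (single (r + s) (1:ℤ) : ZR K) - (single r 1 + single s 1) =
        -(single r 1 + single s 1 - single (r + s) 1) := by ring
    rw [this]
    exact neg_mem (Ideal.subset_span ⟨r, s, rfl⟩)

lemma Iid_eq_span : Iid K = Ideal.span (genSet K) := by
  refine le_antisymm ?_ (span_genSet_le K)
  intro x hx
  have h : (phiHom K).comp (piHom K) = Ideal.Quotient.mk (Ideal.span (genSet K)) := by
    apply MonoidAlgebra.ringHom_ext
    · intro b
      rw [single_one_intCast]
      simp only [RingHom.coe_comp, Function.comp_apply, map_intCast]
    · intro a
      simp only [RingHom.coe_comp, Function.comp_apply, piHom_single_s9]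
      rfl
  have h2 := RingHom.congr_fun h x
  rw [RingHom.coe_comp, Function.comp_apply] at h2
  rw [Iid, RingHom.mem_ker] at hx
  rw [hx, map_zero] at h2
  rwa [eq_comm, Ideal.Quotient.eq_zero_iff_mem] at h2

variable [PerfectRing K p]

lemma frob_surj : ∀ r : K, ∃ u : K, u ^ p = r := fun r => by
  obtain ⟨u, hu⟩ := (PerfectRing.bijective_frobenius (R := K) (p := p)).surjective r
  exact ⟨u, hu⟩

lemma gen_mem_sup (r s : K) :
    single r (1:ℤ) + single s 1 - single (r + s) 1 ∈
      Ideal.span {(p : ZR K)} ⊔ (Iid K) ^ 2 := by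
  obtain ⟨u, rfl⟩ := frob_surj p K r
  obtain ⟨v, rfl⟩ := frob_surj p K s
  have hp : p.Prime := Fact.out
  have hsum : u ^ p + v ^ p = (u + v) ^ p := (add_pow_char u v p).symm
  have e1 : (single (u ^ p) (1:ℤ) : ZR K) = (single u 1) ^ p := by
    rw [MonoidAlgebra.single_pow, one_pow]
  have e2 : (single (v ^ p) (1:ℤ) : ZR K) = (single v 1) ^ p := by
    rw [MonoidAlgebra.single_pow, one_pow]
  have e3 : (single (u ^ p + v ^ p) (1:ℤ) : ZR K) = (single (u+v) 1) ^ p := by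
    rw [hsum, MonoidAlgebra.single_pow, one_pow]
  rw [e1, e2, e3]
  set x : ZR K := single u 1 + single v 1 with hx
  set d : ZR K := single u 1 + single v 1 - single (u + v) 1 with hd
  have hdI : d ∈ Iid K := by
    rw [Iid, RingHom.mem_ker]; simp [piHom_single_s9, d]
  obtain ⟨c1, hc1⟩ := exists_add_pow_prime_eq hp (single u (1:ℤ) : ZR K) (single v 1)
  obtain ⟨c2, hc2⟩ := exists_add_pow_prime_eq hp x (-d)
  have hxd : x + (-d) = single (u+v) 1 := by rw [hx, hd]; ring
  rw [hxd] at hc2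
  have key : (single u (1:ℤ) : ZR K) ^ p + (single v 1) ^ p - (single (u+v) 1) ^ p
      = (p : ZR K) * (-(single u 1 * single v 1 * c1) - x * (-d) * c2) + (-((-d) ^ p)) := by
    have hx' : x = single u 1 + single v 1 := hx
    rw [← hx'] at hc1
    -- hc1 : x ^ p = [u]^p + [v]^p + p*c1 ; hc2 : [u+v]^p = x^p + (-d)^p + p*c2
    linear_combination -hc1 - hc2
  rw [key]
  apply Submodule.add_mem_sup
  · exact Ideal.mem_span_singleton.mpr ⟨-(single u 1 * single v 1 * c1) - x * (-d) * c2, rfl⟩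
  · apply neg_mem
    have h2 : d ^ p ∈ (Iid K) ^ 2 := by
      have h2p : 2 ≤ p := hp.two_le
      have : d ^ p = d ^ 2 * d ^ (p - 2) := by
        rw [← pow_add]
        congr 1
        omega
      rw [this]
      exact Ideal.mul_mem_right _ _ (Ideal.pow_mem_pow hdI 2)
    have : (-d) ^ p = (-1 : ZR K) ^ p * d ^ p := by
      rw [← neg_one_mul, mul_pow]
    rw [this]
    exact Ideal.mul_mem_left _ _ h2

lemma Iid_le_sup : Iid K ≤ Ideal.span {(p : ZR K)} ⊔ (Iid K) ^ 2 := by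
  refine le_trans (le_of_eq (Iid_eq_span K)) ?_
  rw [Ideal.span_le]
  rintro x ⟨r, s, rfl⟩
  exact gen_mem_sup p K r s

lemma pow_le_sup (ν : ℕ) :
    (Iid K) ^ ν ≤ Ideal.span {(p : ZR K) ^ ν} ⊔ (Iid K) ^ (ν + 1) := by
  induction ν with
  | zero => simp [Ideal.span_singleton_one]
  | succ ν ih =>
    have hmul : (Iid K) ^ (ν + 1) = (Iid K) ^ ν * Iid K := by rw [pow_succ]
    rw [hmul]
    calc (Iid K) ^ ν * Iid K
        ≤ (Ideal.span {(p : ZR K) ^ ν} ⊔ (Iid K) ^ (ν + 1)) *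
          (Ideal.span {(p : ZR K)} ⊔ (Iid K) ^ 2) := Ideal.mul_mono ih (Iid_le_sup p K)
      _ ≤ Ideal.span {(p : ZR K) ^ (ν + 1)} ⊔ (Iid K) ^ (ν + 2) := by
          rw [Ideal.sup_mul, Ideal.mul_sup, Ideal.mul_sup]
          have hpI : Ideal.span {(p : ZR K)} ≤ Iid K := by
            rw [Ideal.span_le, Set.singleton_subset_iff]
            exact p_mem_Iid_s9 p K
          have hpIn : ∀ n : ℕ, Ideal.span {(p : ZR K) ^ n} ≤ (Iid K) ^ n := fun n => by
            rw [← Ideal.span_singleton_pow]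
            exact Ideal.pow_right_mono hpI n
          have h1 : Ideal.span {(p : ZR K) ^ ν} * Ideal.span {(p : ZR K)}
              = Ideal.span {(p : ZR K) ^ (ν + 1)} := by
            rw [Ideal.span_singleton_mul_span_singleton, ← pow_succ]
          have h2 : Ideal.span {(p : ZR K) ^ ν} * (Iid K) ^ 2 ≤ (Iid K) ^ (ν + 2) := by
            calc Ideal.span {(p : ZR K) ^ ν} * (Iid K) ^ 2
                ≤ (Iid K) ^ ν * (Iid K) ^ 2 := Ideal.mul_mono_left (hpIn ν)
              _ = (Iid K) ^ (ν + 2) := by rw [← pow_add]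
          have h3 : (Iid K) ^ (ν + 1) * Ideal.span {(p : ZR K)} ≤ (Iid K) ^ (ν + 2) := by
            calc (Iid K) ^ (ν + 1) * Ideal.span {(p : ZR K)}
                ≤ (Iid K) ^ (ν + 1) * (Iid K) ^ 1 := Ideal.mul_mono_right (by
                  rw [pow_one]; exact hpI)
              _ = (Iid K) ^ (ν + 2) := by rw [← pow_add]
          have h4 : (Iid K) ^ (ν + 1) * (Iid K) ^ 2 ≤ (Iid K) ^ (ν + 2) := by
            rw [← pow_add]
            exact Ideal.pow_le_pow_right (by omega)
          rw [h1]
          exact sup_le (sup_le le_sup_left (h2.trans le_sup_right))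
            (sup_le (h3.trans le_sup_right) (h4.trans le_sup_right))

lemma mem_pow_exists (ν : ℕ) (x : ZR K) (hx : x ∈ (Iid K) ^ ν) :
    ∃ a, x - (p : ZR K) ^ ν * a ∈ (Iid K) ^ (ν + 1) := by
  have := pow_le_sup p K ν hx
  rw [Submodule.mem_sup] at this
  obtain ⟨y, hy, z, hz, hyz⟩ := this
  obtain ⟨a, rfl⟩ := Ideal.mem_span_singleton.mp hy
  exact ⟨a, by rw [← hyz]; simpa using hz⟩

lemma Iid_le_sup' (ν : ℕ) : Iid K ≤ Ideal.span {(p : ZR K)} ⊔ (Iid K) ^ (ν + 1) := by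
  induction ν with
  | zero => rw [pow_one]; exact le_sup_right
  | succ ν ih =>
    refine ih.trans (sup_le le_sup_left ?_)
    refine (pow_le_sup p K (ν + 1)).trans (sup_le ?_ le_sup_right)
    refine le_trans ?_ (le_sup_left : _ ≤ Ideal.span {(p : ZR K)} ⊔ (Iid K) ^ (ν + 2))
    rw [Ideal.span_singleton_le_span_singleton]
    exact dvd_pow_self _ (Nat.succ_ne_zero ν)

lemma cancel_p' (m : ℕ) (a : ZR K) (h : (p : ZR K) * a ∈ (Iid K) ^ (m + 1)) :
    a ∈ (Iid K) ^ m := by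
  induction m generalizing a with
  | zero => simp
  | succ m ih =>
    have ha : a ∈ (Iid K) ^ m := ih a ((Ideal.pow_le_pow_right (by omega)) h)
    obtain ⟨t, ht⟩ := mem_pow_exists p K m a ha
    have hpt : (p : ZR K) * (a - (p : ZR K) ^ m * t) ∈ (Iid K) ^ (m + 2) := by
      have : (p : ZR K) ∈ Iid K := p_mem_Iid_s9 p K
      have := Ideal.mul_mem_mul this ht
      rwa [show (Iid K) * (Iid K) ^ (m+1) = (Iid K) ^ (m+2) from by rw [← pow_succ']] at this
    have hppt : (p : ZR K) ^ (m + 1) * t ∈ (Iid K) ^ (m + 2) := by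
      have heq : (p : ZR K) ^ (m + 1) * t = (p : ZR K) * a - (p : ZR K) * (a - (p : ZR K) ^ m * t) := by
        ring
      rw [heq]
      exact sub_mem h hpt
    have htI : t ∈ Iid K := cancel_pow_p p K (m + 1) t hppt
    have h1 : (p : ZR K) ^ m * t ∈ (Iid K) ^ (m + 1) := by
      have := Ideal.mul_mem_mul (Ideal.pow_mem_pow (p_mem_Iid_s9 p K) m) htI
      rwa [← pow_succ] at this
    have : a = (a - (p : ZR K) ^ m * t) + (p : ZR K) ^ m * t := by ring
    rw [this]
    exact add_mem ht h1

end Gen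


section CLevel

variable (p : ℕ) [Fact p.Prime] (K : Type*) [Field K] [CharP K p]

lemma Clim_compat {A : Type*} [CommRing A] {I : Ideal A} (x : Clim A I) {m ν : ℕ}
    (h : m ≤ ν) :
    Ideal.Quotient.factor (Ideal.pow_le_pow_right h) (x.1 ν) = x.1 m := x.2 h

lemma comp_natCast (k : ℕ) (ν : ℕ) :
    ((k : CR K) : Π ν : ℕ, ZR K ⧸ (Iid K) ^ ν) ν = Ideal.Quotient.mk _ (k : ZR K) := by
  have h1 : ((k : CR K) : Π ν : ℕ, ZR K ⧸ (Iid K) ^ ν)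
      = ((k : ℕ) : Π ν : ℕ, ZR K ⧸ (Iid K) ^ ν) := map_natCast (Clim (ZR K) (Iid K)).subtype k
  rw [h1]
  have : ((k : ℕ) : Π ν : ℕ, ZR K ⧸ (Iid K) ^ ν) ν = ((k : ℕ) : ZR K ⧸ (Iid K) ^ ν) := by
    simp
  rw [this, map_natCast (Ideal.Quotient.mk ((Iid K) ^ ν))]

lemma CtoR_eq (x : CR K) (a : ZR K) (ha : x.1 1 = Ideal.Quotient.mk _ a) :
    CtoR K x = piHom K a := by
  have h1 : Ceval (ZR K) (Iid K) 1 x = x.1 1 := rfl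
  rw [CtoR, RingHom.comp_apply, RingHom.comp_apply, h1, ha]
  rw [RingEquiv.toRingHom_eq_coe, RingHom.coe_coe, Ideal.quotEquivOfEq_mk]; rfl

lemma CtoR_surjective : Function.Surjective (CtoR K) := by
  intro t
  refine ⟨CofRingHom (ZR K) (Iid K) (single t 1), ?_⟩
  rw [CtoR_eq K _ (single t 1) rfl, piHom_single_s9]

/-- choice of lifts of the components of an element of `C(K)`. -/
noncomputable def lifts (x : CR K) (ν : ℕ) : ZR K :=
  (Ideal.Quotient.mk_surjective (x.1 ν)).choose

lemma lifts_spec (x : CR K) (ν : ℕ) :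
    Ideal.Quotient.mk ((Iid K) ^ ν) (lifts K x ν) = x.1 ν :=
  (Ideal.Quotient.mk_surjective (x.1 ν)).choose_spec

lemma lifts_mk (x : CR K) {m ν : ℕ} (h : m ≤ ν) :
    Ideal.Quotient.mk ((Iid K) ^ m) (lifts K x ν) = x.1 m := by
  have h1 := Clim_compat x h
  rw [← lifts_spec K x ν, Ideal.Quotient.factor_mk] at h1
  exact h1

lemma lifts_sub_mem (x : CR K) {m ν₁ ν₂ : ℕ} (h1 : m ≤ ν₁) (h2 : m ≤ ν₂) :
    lifts K x ν₁ - lifts K x ν₂ ∈ (Iid K) ^ m := by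
  rw [← Ideal.Quotient.eq_zero_iff_mem, map_sub, lifts_mk K x h1, lifts_mk K x h2, sub_self]

lemma piHom_lifts (x : CR K) (ν : ℕ) (hν : 1 ≤ ν) : piHom K (lifts K x ν) = CtoR K x := by
  rw [CtoR_eq K x (lifts K x ν) (lifts_mk K x hν).symm]

lemma mk_one_pow (a : ZR K) (ha : a ∈ Iid K) :
    Ideal.Quotient.mk ((Iid K) ^ 1) a = 0 := by
  rw [Ideal.Quotient.eq_zero_iff_mem, pow_one]
  exact ha

variable [PerfectRing K p]

/-- Division by `p` in `C(K)` for elements of the kernel of `π̄`. -/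
lemma exists_p_mul (x : CR K) (hx : CtoR K x = 0) : ∃ y : CR K, x = (p : CR K) * y := by
  classical
  -- the lifts at positive levels all lie in I
  have hI : ∀ ν : ℕ, lifts K x (ν + 1) ∈ Iid K := by
    intro ν
    rw [Iid, RingHom.mem_ker, piHom_lifts K x (ν + 1) (by omega), hx]
  -- choose approximate quotients
  have hb : ∀ ν : ℕ, ∃ b, lifts K x (ν + 1) - (p : ZR K) * b ∈ (Iid K) ^ (ν + 1) := by
    intro ν
    have := Iid_le_sup' p K ν (hI ν)
    rw [Submodule.mem_sup] at this
    obtain ⟨y, hy, z, hz, hyz⟩ := this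
    obtain ⟨b, rfl⟩ := Ideal.mem_span_singleton.mp hy
    exact ⟨b, by rw [← hyz]; simpa using hz⟩
  choose b hbspec using hb
  have hcompat : ∀ {m ν : ℕ}, m ≤ ν → b ν - b m ∈ (Iid K) ^ m := by
    intro m ν h
    apply cancel_p' p K
    have heq : (p : ZR K) * (b ν - b m) =
        (lifts K x (m + 1) - (p : ZR K) * b m)
        - (lifts K x (ν + 1) - (p : ZR K) * b ν)
        + (lifts K x (ν + 1) - lifts K x (m + 1)) := by ring
    rw [heq]
    exact add_mem (sub_mem (hbspec m)
      ((Ideal.pow_le_pow_right (by omega)) (hbspec ν)))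
      (lifts_sub_mem K x (by omega) (by omega))
  have hycompat : ∀ ⦃m ν : ℕ⦄ (h : m ≤ ν),
      Ideal.Quotient.factor (Ideal.pow_le_pow_right h)
        (Ideal.Quotient.mk ((Iid K) ^ ν) (b ν)) = Ideal.Quotient.mk ((Iid K) ^ m) (b m) := by
    intro m ν h
    rw [Ideal.Quotient.factor_mk, Ideal.Quotient.eq]
    exact hcompat h
  set y : CR K := ⟨fun ν => Ideal.Quotient.mk _ (b ν), hycompat⟩ with hy
  refine ⟨y, ?_⟩
  apply Subtype.ext
  funext ν
  have hmul : (((p : CR K) * y : CR K) : Π ν : ℕ, ZR K ⧸ (Iid K) ^ ν) ν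
      = ((p : CR K) : Π ν : ℕ, ZR K ⧸ (Iid K) ^ ν) ν * Ideal.Quotient.mk _ (b ν) := rfl
  rw [hmul, comp_natCast, ← map_mul, ← lifts_spec K x ν, Ideal.Quotient.eq]
  have : lifts K x ν - (p : ZR K) * b ν =
      (lifts K x ν - lifts K x (ν + 1)) + (lifts K x (ν + 1) - (p : ZR K) * b ν) := by ring
  rw [this]
  exact add_mem (lifts_sub_mem K x le_rfl (by omega))
    ((Ideal.pow_le_pow_right (by omega)) (hbspec ν))

lemma ring_inverse_unique {M₀ : Type*} [CommMonoidWithZero M₀] {a b : M₀} (h : a * b = 1) :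
    Ring.inverse a = b := by
  have ha : IsUnit a := IsUnit.of_mul_eq_one _ h
  calc Ring.inverse a = Ring.inverse a * (a * b) := by rw [h, mul_one]
    _ = (Ring.inverse a * a) * b := (mul_assoc _ _ _).symm
    _ = b := by rw [Ring.inverse_mul_cancel _ ha, one_mul]

lemma ringHom_inverse {R S : Type*} [CommRing R] [CommRing S] (f : R →+* S) (a : R)
    (h : IsUnit a) : f (Ring.inverse a) = Ring.inverse (f a) := by
  refine (ring_inverse_unique ?_).symm
  rw [← map_mul, Ring.mul_inverse_cancel _ h, map_one]

lemma isUnit_mk (ν : ℕ) (a : ZR K) (ha : piHom K a ≠ 0) :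
    IsUnit (Ideal.Quotient.mk ((Iid K) ^ ν) a) := by
  set t : K := piHom K a with htdef
  set n : ZR K := a * single t⁻¹ 1 - 1 with hn
  have hnI : n ∈ Iid K := by
    rw [Iid, RingHom.mem_ker, hn, map_sub, map_mul, piHom_single_s9, map_one, ← htdef,
      mul_inv_cancel₀ ha, sub_self]
  have hnil : IsNilpotent (Ideal.Quotient.mk ((Iid K) ^ ν) n) := by
    refine ⟨ν, ?_⟩
    rw [← map_pow, Ideal.Quotient.eq_zero_iff_mem]
    exact Ideal.pow_mem_pow hnI ν
  have hu : IsUnit (Ideal.Quotient.mk ((Iid K) ^ ν) (a * single t⁻¹ 1)) := by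
    have : (a * single t⁻¹ 1 : ZR K) = 1 + n := by rw [hn]; ring
    rw [this, map_add, map_one]
    exact hnil.isUnit_one_add
  rw [map_mul] at hu
  exact isUnit_of_mul_isUnit_left hu

lemma isUnit_components (x : CR K) (hx : CtoR K x ≠ 0) (ν : ℕ) : IsUnit (x.1 ν) := by
  cases ν with
  | zero =>
    have hsub : Subsingleton (ZR K ⧸ (Iid K) ^ 0) := by
      refine subsingleton_of_forall_eq 0 fun y => ?_
      obtain ⟨a, rfl⟩ := Ideal.Quotient.mk_surjective y
      exact ((Ideal.Quotient.eq_zero_iff_mem).mpr (show a ∈ (Iid K) ^ 0 by rw [pow_zero, Ideal.one_eq_top]; trivial))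
    rw [Subsingleton.elim (x.1 0) 1]
    exact isUnit_one
  | succ m =>
    rw [← lifts_spec K x (m + 1)]
    exact isUnit_mk K (m + 1) _ (by rw [piHom_lifts K x (m + 1) (by omega)]; exact hx)

lemma isUnit_of_CtoR_ne_zero (x : CR K) (hx : CtoR K x ≠ 0) : IsUnit x := by
  have hu := isUnit_components K x hx
  refine IsUnit.of_mul_eq_one ⟨fun ν => Ring.inverse (x.1 ν), ?_⟩ ?_
  · intro m ν h
    rw [ringHom_inverse _ _ (hu ν), Clim_compat x h]
  · apply Subtype.ext
    funext ν
    show x.1 ν * Ring.inverse (x.1 ν) = 1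
    exact Ring.mul_inverse_cancel _ (hu ν)

lemma pow_p_ne_zero (k : ℕ) : ((p : CR K)) ^ k ≠ 0 := by
  intro h0
  have h1 : ((p ^ k : ℕ) : CR K) = 0 := by push_cast; exact h0
  have h2 := congrFun (congrArg Subtype.val h1) (k + 1)
  rw [comp_natCast] at h2
  have h3 : ((p ^ k : ℕ) : ZR K) ∈ (Iid K) ^ (k + 1) := by
    rw [← Ideal.Quotient.eq_zero_iff_mem, h2]
    rfl
  have h4 : (p : ZR K) ^ k * 1 ∈ (Iid K) ^ (k + 1) := by
    rw [mul_one]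
    push_cast at h3
    exact h3
  have h5 := cancel_pow_p p K k 1 h4
  rw [Iid, RingHom.mem_ker, map_one] at h5
  exact one_ne_zero h5

include p in
lemma natCast_eq_zero (k : ℕ) (h : (k : CR K) = 0) : k = 0 := by
  by_contra hk
  have hcomp : ∀ ν : ℕ, ((k : ℕ) : ZR K) ∈ (Iid K) ^ ν := by
    intro ν
    have h2 := congrFun (congrArg Subtype.val h) ν
    rw [comp_natCast] at h2
    rw [← Ideal.Quotient.eq_zero_iff_mem, h2]
    rfl
  have hdvd : ∀ ν : ℕ, (p : ℤ) ^ ν ∣ (k : ℤ) := by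
    intro ν
    apply intCast_pow_dvd p K ν
    have := wHom_pow_dvd p K ν _ (hcomp ν)
    rwa [map_natCast, ← Int.cast_natCast] at this
  have hple : (p : ℤ) ^ k ≤ (k : ℤ) :=
    Int.le_of_dvd (by exact_mod_cast Nat.pos_of_ne_zero hk) (hdvd k)
  have hp2 : 2 ≤ p := (Fact.out : p.Prime).two_le
  have : k < p ^ k := Nat.lt_pow_self (by omega)
  have : (k : ℤ) < (p : ℤ) ^ k := by exact_mod_cast this
  omega

lemma decomp_nonzero (x : CR K) (hx : x ≠ 0) :
    ∃ (n : ℕ) (u : CR K), IsUnit u ∧ x = (p : CR K) ^ n * u := by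
  classical
  have hμ : ∃ μ, x.1 μ ≠ 0 := by
    by_contra hall
    push_neg at hall
    exact hx (Subtype.ext (funext hall))
  obtain ⟨μ, hμ⟩ := hμ
  set S : ℕ → Prop := fun ν => ∃ z : CR K, x = (p : CR K) ^ ν * z with hS
  have hS0 : S 0 := ⟨x, by rw [pow_zero, one_mul]⟩
  have hbound : ∀ ν, S ν → ν ≤ μ := by
    intro ν hν
    by_contra hgt
    push_neg at hgt
    obtain ⟨z, hz⟩ := hν
    apply hμ
    have h1 : x.1 μ = ((p : CR K) ^ ν : CR K).1 μ * z.1 μ := by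
      rw [hz]; rfl
    have h2 : ((p : CR K) ^ ν : CR K).1 μ = 0 := by
      have h3 : ((p : CR K) ^ ν : CR K) = ((p ^ ν : ℕ) : CR K) := by push_cast; rfl
      rw [h3]
      have h4 := comp_natCast K (p ^ ν) μ
      show (((p ^ ν : ℕ) : CR K) : Π ν : ℕ, ZR K ⧸ (Iid K) ^ ν) μ = 0
      rw [h4, Ideal.Quotient.eq_zero_iff_mem]
      have : ((p ^ ν : ℕ) : ZR K) = (p : ZR K) ^ ν := by push_cast; rfl
      rw [this]
      exact (Ideal.pow_le_pow_right hgt.le) (Ideal.pow_mem_pow (p_mem_Iid_s9 p K) ν)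
    rw [h1, h2, zero_mul]
  set n := Nat.findGreatest S μ with hn
  have hSn : S n := Nat.findGreatest_spec (Nat.zero_le μ) hS0
  have hnot : ¬ S (n + 1) := by
    intro hSn1
    have hle : n + 1 ≤ μ := hbound _ hSn1
    exact Nat.findGreatest_is_greatest (Nat.lt_succ_self n) hle hSn1
  obtain ⟨z, hz⟩ := hSn
  have hzne : CtoR K z ≠ 0 := by
    intro h0
    obtain ⟨z', hz'⟩ := exists_p_mul p K z h0
    exact hnot ⟨z', by rw [hz, hz', pow_succ]; ring⟩
  exact ⟨n, z, isUnit_of_CtoR_ne_zero K z hzne, hz⟩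

end CLevel


/-- Let `p` be a prime and `K` a perfect field of characteristic `p`.
Then `C(K)` is a discrete valuation ring of characteristic `0` whose maximal ideal is
generated by `p`, and whose residue field `C(K)/p·C(K)` is isomorphic to `K` via the map
`π̄` induced by `π`. -/
theorem statement9 (p : ℕ) [Fact p.Prime] (K : Type*) [Field K] [CharP K p]
    (hperf : Function.Bijective fun x : K => x ^ p) :
    CharZero (CR K) ∧
    (Ideal.span {(p : CR K)}).IsMaximal ∧
    (∀ M : Ideal (CR K), M.IsMaximal → M = Ideal.span {(p : CR K)}) ∧
    Function.Surjective (CtoR K) ∧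
    RingHom.ker (CtoR K) = Ideal.span {(p : CR K)} ∧
    ∃ h : IsDomain (CR K), @IsDiscreteValuationRing (CR K) _ h := by
  haveI : PerfectRing K p := ⟨by simpa [frobenius_def] using hperf⟩
  have hsurj : Function.Surjective (CtoR K) := CtoR_surjective K
  have hker : RingHom.ker (CtoR K) = Ideal.span {(p : CR K)} := by
    apply le_antisymm
    · intro x hx
      rw [RingHom.mem_ker] at hx
      obtain ⟨y, rfl⟩ := exists_p_mul p K x hx
      exact Ideal.mem_span_singleton.mpr ⟨y, rfl⟩
    · rw [Ideal.span_le, Set.singleton_subset_iff, SetLike.mem_coe, RingHom.mem_ker,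
        map_natCast]
      exact CharP.cast_eq_zero K p
  have hmax : (Ideal.span {(p : CR K)}).IsMaximal := by
    rw [← hker]
    exact RingHom.ker_isMaximal_of_surjective _ hsurj
  have huniq : ∀ M : Ideal (CR K), M.IsMaximal → M = Ideal.span {(p : CR K)} := by
    intro M hM
    rw [← hker]
    refine hM.eq_of_le (hker ▸ hmax.ne_top) ?_
    intro x hxM
    rw [RingHom.mem_ker]
    by_contra hx
    exact hM.ne_top (M.eq_top_of_isUnit_mem hxM (isUnit_of_CtoR_ne_zero K x hx))
  have hchar : CharZero (CR K) := by
    haveI : CharP (CR K) 0 := ⟨fun x => by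
      rw [zero_dvd_iff]
      exact ⟨fun h => natCast_eq_zero p K x h, fun h => by rw [h, Nat.cast_zero]⟩⟩
    exact CharP.charP_to_charZero (CR K)
  haveI hnt : Nontrivial (CR K) :=
    ⟨⟨0, 1, fun h => zero_ne_one (α := K)
      (by rw [← map_zero (CtoR K), ← map_one (CtoR K), h])⟩⟩
  haveI hdom : IsDomain (CR K) := by
    haveI : NoZeroDivisors (CR K) := by
      refine ⟨fun {x y} hxy => ?_⟩
      by_contra hc
      push_neg at hc
      obtain ⟨hx, hy⟩ := hc
      obtain ⟨a, u, hu, rfl⟩ := decomp_nonzero p K x hx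
      obtain ⟨b, v, hv, rfl⟩ := decomp_nonzero p K y hy
      have h1 : (p : CR K) ^ (a + b) * (u * v) = 0 := by
        rw [← hxy]; ring
      have h2 : (p : CR K) ^ (a + b) = 0 := by
        obtain ⟨w, rfl⟩ := hu
        obtain ⟨w', rfl⟩ := hv
        have := congrArg (fun t => t * ((w⁻¹ : (CR K)ˣ) : CR K) * ((w'⁻¹ : (CR K)ˣ) : CR K)) h1
        simpa [mul_assoc, mul_comm, mul_left_comm] using this
      exact pow_p_ne_zero p K (a + b) h2
    exact NoZeroDivisors.to_isDomain _
  have hpne : (p : CR K) ≠ 0 := by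
    intro h
    exact (Fact.out : p.Prime).ne_zero (natCast_eq_zero p K p h)
  have hprime : Prime (p : CR K) := (Ideal.span_singleton_prime hpne).mp hmax.isPrime
  have hdvr : IsDiscreteValuationRing (CR K) := by
    apply IsDiscreteValuationRing.ofHasUnitMulPowIrreducibleFactorization
    refine ⟨(p : CR K), hprime.irreducible, fun {x} hx => ?_⟩
    obtain ⟨n, u, hu, rfl⟩ := decomp_nonzero p K x hx
    exact ⟨n, ⟨hu.unit, by rw [IsUnit.unit_spec]⟩⟩
  exact ⟨hchar, hmax, huniq, hsurj, hker, hdom, hdvr⟩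
end
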